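/- arXiv:0803.2552 — 4 statements merged into one kernel-verified Lean document; each statement's English description precedes it below -/
import Mathlib

section
/- Let ε ∈ (0,2) and f ∈ L²(0,π). Define h(θ) = -(cot(θ/2))^{1/ε} ∫₀^θ f(t)(tan(t/2))^{1/ε} dt + ∫₀^θ f(t) dt for θ ∈ (0,π). Then h ∈ L²(0,π). -/
open MeasureTheory Set Real

/-- For `ε ∈ (0,2)` and `f ∈ L²(0,π)`, the function
`h(θ) = -(cot(θ/2))^(1/ε) ∫₀^θ f(t) (tan(t/2))^(1/ε) dt + ∫₀^θ f(t) dt`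
belongs to `L²(0,π)`. -/
theorem stmt1 (ε : ℝ) (hε : ε ∈ Set.Ioo (0:ℝ) 2)
    (f : ℝ → ℝ) (hf : MemLp f 2 (volume.restrict (Ioo 0 π)))
    (h : ℝ → ℝ)
    (hh : ∀ θ ∈ Ioo (0:ℝ) π,
      h θ = -((Real.tan (θ/2))⁻¹ ^ (1/ε)) * (∫ t in Ioo 0 θ, f t * (Real.tan (t/2)) ^ (1/ε))
            + ∫ t in Ioo 0 θ, f t) :
    MemLp h 2 (volume.restrict (Ioo 0 π)) := by
  obtain ⟨hε0, -⟩ := hε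
  have hεinv : (0:ℝ) ≤ 1/ε := by positivity
  haveI : IsFiniteMeasure (volume.restrict (Ioo (0:ℝ) π)) :=
    ⟨by rw [Measure.restrict_apply_univ]; exact measure_Ioo_lt_top⟩
  have hfi : IntegrableOn f (Ioo 0 π) :=
    memLp_one_iff_integrable.mp (hf.mono_exponent (by norm_num))
  set g : ℝ → ℝ := fun t => f t * (Real.tan (t/2)) ^ (1/ε) with hg
  have htanpos : ∀ x ∈ Ioo (0:ℝ) π, 0 < Real.tan (x/2) := fun x hx =>
    Real.tan_pos_of_pos_of_lt_pi_div_two (by linarith [hx.1]) (by linarith [hx.2])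
  have htmono : MonotoneOn Real.tan (Ioo (-(π/2)) (π/2)) := Real.strictMonoOn_tan.monotoneOn
  have htannn : ∀ x : ℝ, 0 ≤ x → x < π → 0 ≤ Real.tan (x/2) := by
    intro x hx0 hxπ
    have h0 : (0:ℝ) ∈ Ioo (-(π/2)) (π/2) := ⟨by linarith [Real.pi_pos], by linarith [Real.pi_pos]⟩
    have hx : x/2 ∈ Ioo (-(π/2)) (π/2) := ⟨by linarith [Real.pi_pos], by linarith⟩
    have := htmono h0 hx (by linarith)
    simpa [Real.tan_zero] using this
  have htan_meas : Measurable Real.tan := by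
    have : Real.tan = fun x => Real.sin x / Real.cos x :=
      funext fun x => Real.tan_eq_sin_div_cos x
    rw [this]; exact Real.measurable_sin.div Real.measurable_cos
  have hw_meas : Measurable fun t : ℝ => Real.tan (t/2) ^ (1/ε) :=
    (htan_meas.comp (measurable_id.div_const 2)).pow_const _
  -- f integrable on Icc 0 b for b < π
  have hfIcc : ∀ b : ℝ, b < π → IntegrableOn f (Icc 0 b) := by
    intro b hb
    rcases le_or_gt b 0 with hb0 | hb0
    · have hz : volume (Icc (0:ℝ) b) = 0 := by
        rw [Real.volume_Icc]; exact ENNReal.ofReal_eq_zero.mpr (by linarith)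
      unfold IntegrableOn
      rw [Measure.restrict_eq_zero.mpr hz]
      exact integrable_zero_measure
    · exact (integrableOn_Icc_iff_integrableOn_Ioo).mpr
        (hfi.mono_set (Ioo_subset_Ioo le_rfl hb.le))
  -- g integrable on Icc 0 b for b < π
  have hgint : ∀ b : ℝ, b < π → IntegrableOn g (Icc 0 b) := by
    intro b hb
    rcases le_or_gt b 0 with hb0 | hb0
    · have hz : volume (Icc (0:ℝ) b) = 0 := by
        rw [Real.volume_Icc]; exact ENNReal.ofReal_eq_zero.mpr (by linarith)
      unfold IntegrableOn
      rw [Measure.restrict_eq_zero.mpr hz]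
      exact integrable_zero_measure
    · have hfb := hfIcc b hb
      have hM : (0:ℝ) ≤ Real.tan (b/2) ^ (1/ε) :=
        Real.rpow_nonneg (htannn b hb0.le hb) _
      refine Integrable.mono (hfb.const_mul (Real.tan (b/2) ^ (1/ε)))
        (hfb.aestronglyMeasurable.mul hw_meas.aestronglyMeasurable) ?_
      filter_upwards [self_mem_ae_restrict measurableSet_Icc] with t ht
      have ht2 : t/2 ∈ Ioo (-(π/2)) (π/2) :=
        ⟨by linarith [ht.1, Real.pi_pos], by linarith [ht.2]⟩
      have hb2 : b/2 ∈ Ioo (-(π/2)) (π/2) :=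
        ⟨by linarith [Real.pi_pos], by linarith⟩
      have htle : Real.tan (t/2) ≤ Real.tan (b/2) := htmono ht2 hb2 (by linarith [ht.2])
      have htn : 0 ≤ Real.tan (t/2) := htannn t ht.1 (lt_of_le_of_lt ht.2 hb)
      have hr : Real.tan (t/2) ^ (1/ε) ≤ Real.tan (b/2) ^ (1/ε) :=
        Real.rpow_le_rpow htn htle hεinv
      simp only [hg, norm_mul, Real.norm_eq_abs]
      rw [abs_of_nonneg (Real.rpow_nonneg htn _), abs_of_nonneg hM]
      calc |f t| * Real.tan (t/2) ^ (1/ε) ≤ |f t| * Real.tan (b/2) ^ (1/ε) := by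
            exact mul_le_mul_of_nonneg_left hr (abs_nonneg _)
        _ = Real.tan (b/2) ^ (1/ε) * |f t| := mul_comm _ _
  -- the formula function
  set H : ℝ → ℝ := fun θ =>
    -((Real.tan (θ/2))⁻¹ ^ (1/ε)) * (∫ t in Ioo 0 θ, g t) + ∫ t in Ioo 0 θ, f t with hH
  have hprim : ∀ (u : ℝ → ℝ), (∀ b : ℝ, b < π → IntegrableOn u (Icc 0 b)) →
      ∀ θ ∈ Ioo (0:ℝ) π, ContinuousAt (fun x => ∫ t in Ioo 0 x, u t) θ := by
    intro u hu θ hθ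
    have hbπ : (θ + π)/2 < π := by linarith [hθ.2]
    have hθb : θ < (θ + π)/2 := by linarith [hθ.2]
    have hcont := intervalIntegral.continuousOn_primitive (hu _ hbπ)
    have heq : (fun x => ∫ t in Ioo 0 x, u t) = fun x => ∫ t in Ioc 0 x, u t := by
      funext x; exact (MeasureTheory.integral_Ioc_eq_integral_Ioo).symm
    rw [heq]
    exact hcont.continuousAt (Icc_mem_nhds hθ.1 hθb)
  have hHcont : ContinuousOn H (Ioo 0 π) := by
    intro θ hθ
    apply ContinuousAt.continuousWithinAt
    have hcosθ : Real.cos (θ/2) ≠ 0 :=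
      ne_of_gt (Real.cos_pos_of_mem_Ioo ⟨by linarith [hθ.1, Real.pi_pos], by linarith [hθ.2]⟩)
    have htc : ContinuousAt (fun x : ℝ => Real.tan (x/2)) θ := by
      have hd : ContinuousAt (fun x : ℝ => x/2) θ := (continuous_id.div_const 2).continuousAt
      exact ContinuousAt.comp (x := θ) (g := Real.tan) (f := fun x : ℝ => x/2)
        (Real.continuousAt_tan.mpr hcosθ) hd
    have hne : (Real.tan (θ/2))⁻¹ ≠ 0 := inv_ne_zero (ne_of_gt (htanpos θ hθ))
    have hc1 : ContinuousAt (fun x : ℝ => (Real.tan (x/2))⁻¹ ^ (1/ε)) θ :=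
      (htc.inv₀ (ne_of_gt (htanpos θ hθ))).rpow_const (Or.inl hne)
    exact ((hc1.neg.mul (hprim g hgint θ hθ)).add (hprim f hfIcc θ hθ))
  have hHm : AEStronglyMeasurable H (volume.restrict (Ioo 0 π)) :=
    hHcont.aestronglyMeasurable measurableSet_Ioo
  have hhm : AEStronglyMeasurable h (volume.restrict (Ioo 0 π)) := by
    refine hHm.congr ?_
    rw [Filter.EventuallyEq, ae_restrict_iff' measurableSet_Ioo]
    exact ae_of_all _ fun θ hθ => (hh θ hθ).symm
  refine MemLp.of_bound hhm (2 * ∫ t in Ioo 0 π, |f t|) ?_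
  filter_upwards [self_mem_ae_restrict measurableSet_Ioo] with θ hθ
  rw [hh θ hθ, Real.norm_eq_abs]
  set T := Real.tan (θ/2) with hT
  have hTpos : 0 < T := htanpos θ hθ
  have hTp : 0 < T ^ (1/ε) := Real.rpow_pos_of_pos hTpos _
  have hIf : IntegrableOn (fun t => |f t|) (Ioo 0 θ) :=
    (((hfIcc θ hθ.2).mono_set Ioo_subset_Icc_self)).abs
  have hIg : IntegrableOn (fun t => ‖g t‖) (Ioo 0 θ) :=
    (((hgint θ hθ.2).mono_set Ioo_subset_Icc_self)).norm
  -- key estimate on first integral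
  have h2 : ∫ t in Ioo 0 θ, ‖g t‖ ≤ ∫ t in Ioo 0 θ, T ^ (1/ε) * |f t| := by
    refine setIntegral_mono_on hIg (hIf.const_mul _) measurableSet_Ioo ?_
    intro t ht
    have ht2 : t/2 ∈ Ioo (-(π/2)) (π/2) :=
      ⟨by linarith [ht.1, Real.pi_pos], by linarith [ht.2, hθ.2]⟩
    have hθ2 : θ/2 ∈ Ioo (-(π/2)) (π/2) :=
      ⟨by linarith [hθ.1, Real.pi_pos], by linarith [hθ.2]⟩
    have htle : Real.tan (t/2) ≤ T := htmono ht2 hθ2 (by linarith [ht.2])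
    have htn : 0 ≤ Real.tan (t/2) := htannn t ht.1.le (lt_trans ht.2 hθ.2)
    have hr : Real.tan (t/2) ^ (1/ε) ≤ T ^ (1/ε) := Real.rpow_le_rpow htn htle hεinv
    simp only [hg, norm_mul, Real.norm_eq_abs]
    rw [abs_of_nonneg (Real.rpow_nonneg htn _)]
    calc |f t| * Real.tan (t/2) ^ (1/ε) ≤ |f t| * T ^ (1/ε) :=
          mul_le_mul_of_nonneg_left hr (abs_nonneg _)
      _ = T ^ (1/ε) * |f t| := mul_comm _ _
  have h3 : ∫ t in Ioo 0 θ, T ^ (1/ε) * |f t| = T ^ (1/ε) * ∫ t in Ioo 0 θ, |f t| :=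
    integral_const_mul _ _
  have h1 : |∫ t in Ioo 0 θ, g t| ≤ ∫ t in Ioo 0 θ, ‖g t‖ := by
    simpa [Real.norm_eq_abs] using
      norm_integral_le_integral_norm (μ := volume.restrict (Ioo 0 θ)) g
  have h4 : |∫ t in Ioo 0 θ, f t| ≤ ∫ t in Ioo 0 θ, |f t| := by
    simpa [Real.norm_eq_abs] using
      norm_integral_le_integral_norm (μ := volume.restrict (Ioo 0 θ)) f
  have h5 : ∫ t in Ioo 0 θ, |f t| ≤ ∫ t in Ioo 0 π, |f t| := by
    refine setIntegral_mono_set hfi.abs (ae_of_all _ fun t => abs_nonneg _) ?_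
    exact HasSubset.Subset.eventuallyLE (Ioo_subset_Ioo le_rfl hθ.2.le)
  have hinv : T⁻¹ ^ (1/ε) = (T ^ (1/ε))⁻¹ := Real.inv_rpow hTpos.le _
  have hterm1 : |(-(T⁻¹ ^ (1/ε))) * ∫ t in Ioo 0 θ, g t| ≤ ∫ t in Ioo 0 θ, |f t| := by
    rw [abs_mul, abs_neg, hinv, abs_of_nonneg (inv_nonneg.mpr hTp.le)]
    have : (T ^ (1/ε))⁻¹ * |∫ t in Ioo 0 θ, g t| ≤
        (T ^ (1/ε))⁻¹ * (T ^ (1/ε) * ∫ t in Ioo 0 θ, |f t|) := by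
      apply mul_le_mul_of_nonneg_left _ (inv_nonneg.mpr hTp.le)
      calc |∫ t in Ioo 0 θ, g t| ≤ ∫ t in Ioo 0 θ, ‖g t‖ := h1
        _ ≤ ∫ t in Ioo 0 θ, T ^ (1/ε) * |f t| := h2
        _ = T ^ (1/ε) * ∫ t in Ioo 0 θ, |f t| := h3
    rwa [inv_mul_cancel_left₀ (ne_of_gt hTp)] at this
  calc |(-(T⁻¹ ^ (1/ε))) * (∫ t in Ioo 0 θ, g t) + ∫ t in Ioo 0 θ, f t|
      ≤ |(-(T⁻¹ ^ (1/ε))) * ∫ t in Ioo 0 θ, g t| + |∫ t in Ioo 0 θ, f t| := abs_add_le _ _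
    _ ≤ (∫ t in Ioo 0 θ, |f t|) + ∫ t in Ioo 0 θ, |f t| := add_le_add hterm1 h4
    _ ≤ (∫ t in Ioo 0 π, |f t|) + ∫ t in Ioo 0 π, |f t| := add_le_add h5 h5
    _ = 2 * ∫ t in Ioo 0 π, |f t| := by ring
end

section
/- Let ε ∈ (0,2) and f ∈ L²(0,π). Define h'(θ) = -(1/(ε sin θ)) (cot(θ/2))^{1/ε} ∫₀^θ f(t)(tan(t/2))^{1/ε} dt for θ ∈ (0,δ) with δ small. Then h' ∈ L²(0,δ) and ‖h'‖_{L²(0,δ)} ≤ K ‖f‖_{L²(0,π)} for a constant K depending only on ε and δ. -/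
open MeasureTheory Set Real

lemma integral_Ioo_rpow_pos {r θ : ℝ} (hr : -1 < r) (hθ : 0 < θ) :
    ∫ t in Ioo (0:ℝ) θ, t ^ r = θ ^ (r+1) / (r+1) := by
  rw [Measure.restrict_congr_set Ioo_ae_eq_Ioc, ← intervalIntegral.integral_of_le hθ.le,
    integral_rpow (Or.inl hr), Real.zero_rpow (by linarith), sub_zero]

lemma integrableOn_Ioo_rpow_pos {r θ : ℝ} (hr : 0 ≤ r) (hθ : 0 < θ) :
    IntegrableOn (fun t : ℝ => t ^ r) (Ioo 0 θ) := by
  have := (intervalIntegrable_iff_integrableOn_Ioc_of_le hθ.le).1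
    (intervalIntegral.intervalIntegrable_rpow (r := r) (μ := volume) (Or.inl hr))
  exact this.mono_set Ioo_subset_Ioc_self

lemma integrableOn_Ioo_rpow_off {r t δ : ℝ} (h0 : 0 < t) (htδ : t ≤ δ) :
    IntegrableOn (fun θ : ℝ => θ ^ r) (Ioo t δ) := by
  have h0' : (0:ℝ) ∉ uIcc t δ := by
    rw [uIcc_of_le htδ]; intro h; exact absurd h.1 (by linarith)
  have := (intervalIntegrable_iff_integrableOn_Ioc_of_le htδ).1
    (intervalIntegral.intervalIntegrable_rpow (r := r) (μ := volume) (Or.inr h0'))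
  exact this.mono_set Ioo_subset_Ioc_self

lemma integral_Ioo_rpow_tail {r t δ : ℝ} (hr : r < -1) (h0 : 0 < t) (htδ : t ≤ δ) :
    ∫ θ in Ioo t δ, θ ^ r ≤ t ^ (r+1) / (-(r+1)) := by
  have h0' : (0:ℝ) ∉ uIcc t δ := by
    rw [uIcc_of_le htδ]; intro h; exact absurd h.1 (by linarith)
  rw [Measure.restrict_congr_set Ioo_ae_eq_Ioc, ← intervalIntegral.integral_of_le htδ,
    integral_rpow (Or.inr ⟨by linarith, h0'⟩)]
  have heq : (δ ^ (r+1) - t ^ (r+1)) / (r+1) = (t ^ (r+1) - δ ^ (r+1)) / (-(r+1)) := by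
    rw [div_eq_div_iff (by linarith) (by linarith)]; ring
  rw [heq]
  gcongr
  · linarith
  · exact sub_le_self _ (Real.rpow_nonneg (by linarith) _)

lemma cs_step {p θ : ℝ} (hp : 1/2 < p) (hθ : 0 < θ) (F : ℝ → ENNReal) (hF : Measurable F) :
    (∫⁻ t in Ioo (0:ℝ) θ, F t * ENNReal.ofReal (t ^ p)) ^ (2:ℝ)
      ≤ ENNReal.ofReal (1/(p+1/2) * θ ^ (p + 1/2)) *
        ∫⁻ t in Ioo (0:ℝ) θ, F t ^ (2:ℝ) * ENNReal.ofReal (t ^ (p + 1/2)) := by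
  set a : ℝ → ENNReal := fun t => F t * ENNReal.ofReal (t ^ ((p + 1/2)/2)) with ha
  set b : ℝ → ENNReal := fun t => ENNReal.ofReal (t ^ ((p - 1/2)/2)) with hb
  have hmeasa : AEMeasurable a (volume.restrict (Ioo 0 θ)) := by fun_prop
  have hmeasb : AEMeasurable b (volume.restrict (Ioo 0 θ)) := by fun_prop
  have hconj : Real.HolderConjugate 2 2 := Real.HolderConjugate.two_two
  have h1 : (∫⁻ t in Ioo (0:ℝ) θ, F t * ENNReal.ofReal (t ^ p))
      = ∫⁻ t in Ioo (0:ℝ) θ, (a * b) t := by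
    apply setLIntegral_congr_fun measurableSet_Ioo
    intro t ht
    simp only [ha, hb, Pi.mul_apply]
    rw [mul_assoc, ← ENNReal.ofReal_mul (Real.rpow_nonneg ht.1.le _),
      ← Real.rpow_add ht.1, show (p + 1/2)/2 + (p - 1/2)/2 = p by ring]
  have h2 : (∫⁻ t in Ioo (0:ℝ) θ, a t ^ (2:ℝ))
      = ∫⁻ t in Ioo (0:ℝ) θ, F t ^ (2:ℝ) * ENNReal.ofReal (t ^ (p + 1/2)) := by
    apply setLIntegral_congr_fun measurableSet_Ioo
    intro t ht
    beta_reduce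
    rw [ha]
    rw [ENNReal.mul_rpow_of_nonneg _ _ (by norm_num),
      ENNReal.ofReal_rpow_of_nonneg (Real.rpow_nonneg ht.1.le _) (by norm_num)]
    congr 2
    rw [← Real.rpow_mul ht.1.le]
    norm_num
  have h3 : (∫⁻ t in Ioo (0:ℝ) θ, b t ^ (2:ℝ))
      = ENNReal.ofReal (1/(p+1/2) * θ ^ (p + 1/2)) := by
    have e1 : (∫⁻ t in Ioo (0:ℝ) θ, b t ^ (2:ℝ))
        = ∫⁻ t in Ioo (0:ℝ) θ, ENNReal.ofReal (t ^ (p - 1/2)) := by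
      apply setLIntegral_congr_fun measurableSet_Ioo
      intro t ht
      beta_reduce
      rw [hb, ENNReal.ofReal_rpow_of_nonneg (Real.rpow_nonneg ht.1.le _) (by norm_num)]
      congr 1
      rw [← Real.rpow_mul ht.1.le]
      norm_num
    rw [e1, ← ofReal_integral_eq_lintegral_ofReal
      (integrableOn_Ioo_rpow_pos (by linarith) hθ)]
    · rw [integral_Ioo_rpow_pos (by linarith) hθ]
      congr 1
      rw [show p - 1/2 + 1 = p + 1/2 by ring]
      ring
    · filter_upwards [ae_restrict_mem measurableSet_Ioo] with t ht
      exact Real.rpow_nonneg ht.1.le _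
  calc (∫⁻ t in Ioo (0:ℝ) θ, F t * ENNReal.ofReal (t ^ p)) ^ (2:ℝ)
      = (∫⁻ t in Ioo (0:ℝ) θ, (a * b) t) ^ (2:ℝ) := by rw [h1]
    _ ≤ ((∫⁻ t in Ioo (0:ℝ) θ, a t ^ (2:ℝ)) ^ (1/(2:ℝ)) *
          (∫⁻ t in Ioo (0:ℝ) θ, b t ^ (2:ℝ)) ^ (1/(2:ℝ))) ^ (2:ℝ) := by
        apply ENNReal.rpow_le_rpow _ (by norm_num)
        exact ENNReal.lintegral_mul_le_Lp_mul_Lq _ hconj hmeasa hmeasb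
    _ = (∫⁻ t in Ioo (0:ℝ) θ, a t ^ (2:ℝ)) * (∫⁻ t in Ioo (0:ℝ) θ, b t ^ (2:ℝ)) := by
        rw [ENNReal.mul_rpow_of_nonneg _ _ (by norm_num), ← ENNReal.rpow_mul, ← ENNReal.rpow_mul]
        norm_num
    _ = ENNReal.ofReal (1/(p+1/2) * θ ^ (p + 1/2)) *
        ∫⁻ t in Ioo (0:ℝ) θ, F t ^ (2:ℝ) * ENNReal.ofReal (t ^ (p + 1/2)) := by
        rw [h2, h3, mul_comm]

lemma hardy_core {p δ : ℝ} (hp : 1/2 < p) (hδ : 0 < δ) (F : ℝ → ENNReal)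
    (hF : Measurable F) (hFfin : ∀ t, F t ≠ ⊤) :
    (∫⁻ θ in Ioo (0:ℝ) δ, ENNReal.ofReal (θ ^ (-(3/2:ℝ) - p)) *
        ∫⁻ t in Ioo (0:ℝ) θ, F t * ENNReal.ofReal (t ^ (p + 1/2)))
      ≤ ENNReal.ofReal (1/(p+1/2)) * ∫⁻ t in Ioo (0:ℝ) δ, F t := by
  set W : ℝ × ℝ → ENNReal := fun q =>
    if q.2 < q.1 then ENNReal.ofReal (q.1 ^ (-(3/2:ℝ) - p)) *
      (F q.2 * ENNReal.ofReal (q.2 ^ (p + 1/2))) else 0 with hW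
  have hWmeas : Measurable W := by
    apply Measurable.ite (measurableSet_lt measurable_snd measurable_fst) ?_ measurable_const
    fun_prop
  have step1 : (∫⁻ θ in Ioo (0:ℝ) δ, ENNReal.ofReal (θ ^ (-(3/2:ℝ) - p)) *
        ∫⁻ t in Ioo (0:ℝ) θ, F t * ENNReal.ofReal (t ^ (p + 1/2)))
      = ∫⁻ θ in Ioo (0:ℝ) δ, ∫⁻ t in Ioo (0:ℝ) δ, W (θ, t) := by
    apply setLIntegral_congr_fun measurableSet_Ioo
    intro θ hθ
    have e1 : ∀ t : ℝ, W (θ, t) = (Iio θ).indicator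
        (fun t => ENNReal.ofReal (θ ^ (-(3/2:ℝ) - p)) *
          (F t * ENNReal.ofReal (t ^ (p + 1/2)))) t := by
      intro t
      by_cases h : t < θ <;> simp [hW, h, Set.indicator_apply, Set.mem_Iio]
    simp only [e1]
    rw [lintegral_indicator measurableSet_Iio, Measure.restrict_restrict measurableSet_Iio]
    have e2 : Iio θ ∩ Ioo (0:ℝ) δ = Ioo 0 θ := by
      ext x
      constructor
      · rintro ⟨h1, h2, _⟩; exact ⟨h2, h1⟩
      · rintro ⟨h1, h2⟩; exact ⟨h2, h1, h2.trans hθ.2⟩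
    rw [e2, ← lintegral_const_mul' _ _ ENNReal.ofReal_ne_top]
  have step2 : (∫⁻ θ in Ioo (0:ℝ) δ, ∫⁻ t in Ioo (0:ℝ) δ, W (θ, t))
      = ∫⁻ t in Ioo (0:ℝ) δ, ∫⁻ θ in Ioo (0:ℝ) δ, W (θ, t) := by
    exact lintegral_lintegral_swap (hWmeas.aemeasurable)
  have step3 : ∀ t ∈ Ioo (0:ℝ) δ, (∫⁻ θ in Ioo (0:ℝ) δ, W (θ, t))
      ≤ ENNReal.ofReal (1/(p+1/2)) * F t := by
    intro t ht
    set C : ENNReal := F t * ENNReal.ofReal (t ^ (p + 1/2)) with hC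
    have hCne : C ≠ ⊤ := ENNReal.mul_ne_top (hFfin t) ENNReal.ofReal_ne_top
    have e1 : ∀ θ : ℝ, W (θ, t) = (Ioi t).indicator
        (fun θ => ENNReal.ofReal (θ ^ (-(3/2:ℝ) - p))) θ * C := by
      intro θ
      by_cases h : t < θ <;> simp [hW, hC, h, Set.indicator_apply, Set.mem_Ioi]
    simp only [e1]
    rw [lintegral_mul_const' _ _ hCne, lintegral_indicator measurableSet_Ioi,
      Measure.restrict_restrict measurableSet_Ioi]
    have e2 : Ioi t ∩ Ioo (0:ℝ) δ = Ioo t δ := by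
      ext x
      constructor
      · rintro ⟨h1, _, h3⟩; exact ⟨h1, h3⟩
      · rintro ⟨h1, h2⟩; exact ⟨h1, ht.1.trans h1, h2⟩
    rw [e2]
    have hint : (∫⁻ θ in Ioo t δ, ENNReal.ofReal (θ ^ (-(3/2:ℝ) - p)))
        ≤ ENNReal.ofReal (t ^ (-(1/2:ℝ) - p) / (p + 1/2)) := by
      rw [← ofReal_integral_eq_lintegral_ofReal
        (integrableOn_Ioo_rpow_off ht.1 ht.2.le) ?_]
      · apply ENNReal.ofReal_le_ofReal
        have := integral_Ioo_rpow_tail (r := -(3/2:ℝ) - p) (by linarith) ht.1 ht.2.le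
        calc ∫ θ in Ioo t δ, θ ^ (-(3/2:ℝ) - p) ≤ t ^ (-(3/2:ℝ) - p + 1) / (-(-(3/2:ℝ) - p + 1)) := this
          _ = t ^ (-(1/2:ℝ) - p) / (p + 1/2) := by
              rw [show -(3/2:ℝ) - p + 1 = -(1/2:ℝ) - p by ring]
              congr 1; ring
      · filter_upwards [ae_restrict_mem measurableSet_Ioo] with θ hθ
        exact Real.rpow_nonneg (by linarith [ht.1, hθ.1]) _
    calc (∫⁻ θ in Ioo t δ, ENNReal.ofReal (θ ^ (-(3/2:ℝ) - p))) * C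
        ≤ ENNReal.ofReal (t ^ (-(1/2:ℝ) - p) / (p + 1/2)) * C :=
          mul_le_mul_left hint C
      _ = ENNReal.ofReal (1/(p+1/2)) * F t := by
          rw [hC, show ENNReal.ofReal (t ^ (-(1/2:ℝ) - p) / (p + 1/2)) *
              (F t * ENNReal.ofReal (t ^ (p + 1/2)))
            = (ENNReal.ofReal (t ^ (-(1/2:ℝ) - p) / (p + 1/2)) *
              ENNReal.ofReal (t ^ (p + 1/2))) * F t by ring]
          congr 1
          rw [← ENNReal.ofReal_mul (div_nonneg (Real.rpow_nonneg ht.1.le _) (by linarith))]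
          congr 1
          rw [div_mul_eq_mul_div, ← Real.rpow_add ht.1,
            show -(1/2:ℝ) - p + (p + 1/2) = 0 by ring, Real.rpow_zero, one_div]
  calc (∫⁻ θ in Ioo (0:ℝ) δ, ENNReal.ofReal (θ ^ (-(3/2:ℝ) - p)) *
        ∫⁻ t in Ioo (0:ℝ) θ, F t * ENNReal.ofReal (t ^ (p + 1/2)))
      = ∫⁻ t in Ioo (0:ℝ) δ, ∫⁻ θ in Ioo (0:ℝ) δ, W (θ, t) := by rw [step1, step2]
    _ ≤ ∫⁻ t in Ioo (0:ℝ) δ, ENNReal.ofReal (1/(p+1/2)) * F t := by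
        apply setLIntegral_mono_ae (by fun_prop) (ae_of_all _ step3)
    _ = ENNReal.ofReal (1/(p+1/2)) * ∫⁻ t in Ioo (0:ℝ) δ, F t :=
        lintegral_const_mul' _ _ ENNReal.ofReal_ne_top

lemma measurable_tan_half_rpow (p : ℝ) : Measurable (fun t : ℝ => Real.tan (t/2) ^ p) := by
  have h : Measurable Real.tan := by
    have : Real.tan = fun x => Real.sin x / Real.cos x := funext fun x => Real.tan_eq_sin_div_cos x
    rw [this]
    exact Real.continuous_sin.measurable.div Real.continuous_cos.measurable
  exact (h.comp (measurable_id.div_const 2)).pow measurable_const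

lemma tan_half_pos {t : ℝ} (h0 : 0 < t) (ht : t < π/2) : 0 < Real.tan (t/2) :=
  lt_trans (by linarith) (Real.lt_tan (by linarith) (by linarith))

lemma tan_half_le {t : ℝ} (h0 : 0 < t) (ht : t < π/2) : Real.tan (t/2) ≤ t := by
  have hcos : Real.cos (π/3) ≤ Real.cos (t/2) :=
    Real.cos_le_cos_of_nonneg_of_le_pi (by linarith) (by linarith [Real.pi_pos]) (by linarith [Real.pi_pos])
  rw [Real.cos_pi_div_three] at hcos
  have hsin : Real.sin (t/2) ≤ t/2 := Real.sin_le (by linarith)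
  rw [Real.tan_eq_sin_div_cos]
  rw [div_le_iff₀ (by linarith)]
  nlinarith [Real.sin_le (show (0:ℝ) ≤ t/2 by linarith)]

lemma half_le_tan_half {θ : ℝ} (h0 : 0 < θ) (hθ : θ < π/2) : θ/2 ≤ Real.tan (θ/2) :=
  (Real.lt_tan (by linarith) (by linarith)).le

lemma sin_lower {θ δ : ℝ} (h0 : 0 < θ) (hθδ : θ < δ) (hδ : δ < π/2) :
    θ * Real.cos δ ≤ Real.sin θ := by
  have hδ0 : 0 < δ := h0.trans hθδ
  have hcosθ : 0 < Real.cos θ := Real.cos_pos_of_mem_Ioo ⟨by linarith, by linarith⟩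
  have hcos : Real.cos δ ≤ Real.cos θ :=
    Real.cos_le_cos_of_nonneg_of_le_pi h0.le (by linarith [Real.pi_pos]) hθδ.le
  have htan : θ < Real.tan θ := Real.lt_tan h0 (by linarith)
  have : Real.sin θ = Real.tan θ * Real.cos θ := by
    rw [Real.tan_eq_sin_div_cos, div_mul_cancel₀ _ hcosθ.ne']
  nlinarith

/-- For `ε ∈ (0,2)` and small `δ > 0` there is a constant `K`
(depending only on `ε` and `δ`) such that for every `f ∈ L²(0,π)` the function
`h'(θ) = -(1/(ε sin θ)) (cot(θ/2))^(1/ε) ∫₀^θ f(t) (tan(t/2))^(1/ε) dt`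
belongs to `L²(0,δ)` with `‖h'‖_{L²(0,δ)} ≤ K ‖f‖_{L²(0,π)}`. -/
theorem stmt3 (ε : ℝ) (hε : ε ∈ Set.Ioo (0:ℝ) 2) (δ : ℝ) (hδ : δ ∈ Set.Ioo (0:ℝ) (π/2)) :
    ∃ K : ℝ, 0 < K ∧
      ∀ f : ℝ → ℝ, MemLp f 2 (volume.restrict (Ioo 0 π)) →
        ∀ h' : ℝ → ℝ,
          (∀ θ ∈ Ioo (0:ℝ) δ,
            h' θ = -(1 / (ε * Real.sin θ)) * ((Real.tan (θ/2))⁻¹ ^ (1/ε)) *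
              (∫ t in Ioo 0 θ, f t * (Real.tan (t/2)) ^ (1/ε))) →
          MemLp h' 2 (volume.restrict (Ioo 0 δ)) ∧
          (eLpNorm h' 2 (volume.restrict (Ioo 0 δ))).toReal ≤
            K * (eLpNorm f 2 (volume.restrict (Ioo 0 π))).toReal := by
  obtain ⟨hε0, hε2⟩ := hε
  obtain ⟨hδ0, hδπ⟩ := hδ
  have hπ : 0 < π := Real.pi_pos
  have hδπ' : δ < π := by linarith
  set p : ℝ := 1/ε with hpdef
  have hp : 1/2 < p := one_div_lt_one_div_of_lt hε0 hε2
  have hp0 : 0 < p := by linarith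
  have hcosδ : 0 < Real.cos δ := Real.cos_pos_of_mem_Ioo ⟨by linarith, hδπ⟩
  set C₁ : ℝ := (1 / (ε * Real.cos δ)) * 2 ^ p with hC₁def
  have h2p : (0:ℝ) < 2 ^ p := Real.rpow_pos_of_pos two_pos p
  have hC₁0 : 0 < C₁ := by
    apply mul_pos (by positivity) h2p
  set c₂ : ℝ := 1/(p + 1/2) with hc₂def
  have hc₂0 : 0 < c₂ := by rw [hc₂def]; positivity
  refine ⟨C₁ * c₂, mul_pos hC₁0 hc₂0, ?_⟩
  intro f hf h' hh'
  haveI hfinδ : IsFiniteMeasure (volume.restrict (Ioo (0:ℝ) δ)) := by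
    constructor; rw [Measure.restrict_apply_univ]; simp [Real.volume_Ioo]
  have hIooδπ : Ioo (0:ℝ) δ ⊆ Ioo 0 π := Ioo_subset_Ioo le_rfl (by linarith)
  -- integrability of f on (0, δ)
  have hfδ : MemLp f 2 (volume.restrict (Ioo 0 δ)) :=
    hf.mono_measure (Measure.restrict_mono hIooδπ le_rfl)
  have hfint : IntegrableOn f (Ioo 0 δ) volume := hfδ.integrable one_le_two
  -- integrability of the two weighted integrands
  have hw : ∀ θ, 0 < θ → θ ≤ δ →
      IntegrableOn (fun t => f t * Real.tan (t/2) ^ p) (Ioo 0 θ) volume := by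
    intro θ h0 hle
    have hsub : Ioo (0:ℝ) θ ⊆ Ioo 0 δ := Ioo_subset_Ioo le_rfl hle
    apply Integrable.mono' (((hfint.mono_set hsub).norm).const_mul (δ ^ p))
    · exact ((hfδ.aestronglyMeasurable.mono_measure
        (Measure.restrict_mono hsub le_rfl)).mul
        (measurable_tan_half_rpow p).aestronglyMeasurable)
    · filter_upwards [ae_restrict_mem measurableSet_Ioo] with t ht
      have ht2 : t < π/2 := by linarith [ht.2]
      have htan0 : 0 < Real.tan (t/2) := tan_half_pos ht.1 ht2
      have htle : Real.tan (t/2) ≤ δ := (tan_half_le ht.1 ht2).trans (by linarith [ht.2])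
      rw [norm_mul, Real.norm_eq_abs, Real.norm_eq_abs,
        abs_of_nonneg (Real.rpow_nonneg htan0.le p)]
      calc |f t| * Real.tan (t/2) ^ p ≤ |f t| * δ ^ p := by
            apply mul_le_mul_of_nonneg_left
              (Real.rpow_le_rpow htan0.le htle hp0.le) (abs_nonneg _)
        _ = δ ^ p * ‖f t‖ := by rw [Real.norm_eq_abs]; ring
  have hw2 : ∀ θ, 0 < θ → θ ≤ δ →
      IntegrableOn (fun t => |f t| * t ^ p) (Ioo 0 θ) volume := by
    intro θ h0 hle
    have hsub : Ioo (0:ℝ) θ ⊆ Ioo 0 δ := Ioo_subset_Ioo le_rfl hle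
    apply Integrable.mono' (((hfint.mono_set hsub).norm).const_mul (δ ^ p))
    · exact (((hfδ.aestronglyMeasurable.mono_measure
        (Measure.restrict_mono hsub le_rfl)).norm).mul
        ((measurable_id.pow (measurable_const : Measurable fun _ : ℝ => p))).aestronglyMeasurable)
    · filter_upwards [ae_restrict_mem measurableSet_Ioo] with t ht
      rw [Real.norm_eq_abs, abs_mul, abs_abs, abs_of_nonneg (Real.rpow_nonneg ht.1.le p)]
      calc |f t| * t ^ p ≤ |f t| * δ ^ p := by
            apply mul_le_mul_of_nonneg_left
              (Real.rpow_le_rpow ht.1.le (by linarith [ht.2]) hp0.le) (abs_nonneg _)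
        _ = δ ^ p * ‖f t‖ := by rw [Real.norm_eq_abs]; ring
  -- Step A: pointwise bound
  have hstepA : ∀ θ ∈ Ioo (0:ℝ) δ,
      |h' θ| ≤ C₁ * θ ^ (-(1:ℝ)-p) * ∫ t in Ioo 0 θ, |f t| * t ^ p := by
    intro θ hθ
    obtain ⟨hθ0, hθδ⟩ := hθ
    have hθπ2 : θ < π/2 := by linarith
    have hsinθ : 0 < Real.sin θ := Real.sin_pos_of_pos_of_lt_pi hθ0 (by linarith)
    have htanθ : 0 < Real.tan (θ/2) := tan_half_pos hθ0 hθπ2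
    have h1 : |(1 : ℝ) / (ε * Real.sin θ)| ≤ 1 / (ε * Real.cos δ) * θ⁻¹ := by
      rw [abs_of_pos (by positivity)]
      rw [show (1:ℝ) / (ε * Real.cos δ) * θ⁻¹ = 1 / (ε * (θ * Real.cos δ)) by
        field_simp]
      apply one_div_le_one_div_of_le (by positivity)
      exact mul_le_mul_of_nonneg_left (sin_lower hθ0 hθδ hδπ) hε0.le
    have h2 : |(Real.tan (θ/2))⁻¹ ^ p| ≤ 2 ^ p * θ ^ (-p) := by
      rw [abs_of_nonneg (Real.rpow_nonneg (inv_nonneg.2 htanθ.le) p)]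
      have hbase : (Real.tan (θ/2))⁻¹ ≤ 2 * θ⁻¹ := by
        rw [show (2:ℝ) * θ⁻¹ = (θ/2)⁻¹ by field_simp]
        exact inv_anti₀ (by linarith) (half_le_tan_half hθ0 hθπ2)
      calc (Real.tan (θ/2))⁻¹ ^ p ≤ (2 * θ⁻¹) ^ p :=
            Real.rpow_le_rpow (inv_nonneg.2 htanθ.le) hbase hp0.le
        _ = 2 ^ p * θ ^ (-p) := by
            rw [Real.mul_rpow (by norm_num) (inv_nonneg.2 hθ0.le),
              ← Real.rpow_neg_one θ, ← Real.rpow_mul hθ0.le]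
            norm_num
    have h3 : |∫ t in Ioo 0 θ, f t * Real.tan (t/2) ^ p| ≤ ∫ t in Ioo 0 θ, |f t| * t ^ p := by
      calc |∫ t in Ioo 0 θ, f t * Real.tan (t/2) ^ p|
          ≤ ∫ t in Ioo 0 θ, ‖f t * Real.tan (t/2) ^ p‖ := by
            rw [← Real.norm_eq_abs]
            exact norm_integral_le_integral_norm _
        _ ≤ ∫ t in Ioo 0 θ, |f t| * t ^ p := by
            apply setIntegral_mono_on ((hw θ hθ0 hθδ.le).norm) (hw2 θ hθ0 hθδ.le)
              measurableSet_Ioo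
            intro t ht
            have ht2 : t < π/2 := by linarith [ht.2]
            have htan0 : 0 < Real.tan (t/2) := tan_half_pos ht.1 ht2
            rw [norm_mul, Real.norm_eq_abs, Real.norm_eq_abs,
              abs_of_nonneg (Real.rpow_nonneg htan0.le p)]
            exact mul_le_mul_of_nonneg_left
              (Real.rpow_le_rpow htan0.le (tan_half_le ht.1 ht2) hp0.le) (abs_nonneg _)
    have hAr0 : 0 ≤ ∫ t in Ioo 0 θ, |f t| * t ^ p := (abs_nonneg _).trans h3
    calc |h' θ| = |(1 : ℝ) / (ε * Real.sin θ)| * |(Real.tan (θ/2))⁻¹ ^ p| *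
          |∫ t in Ioo 0 θ, f t * Real.tan (t/2) ^ p| := by
          rw [hh' θ ⟨hθ0, hθδ⟩, abs_mul, abs_mul, abs_neg]
      _ ≤ (1 / (ε * Real.cos δ) * θ⁻¹) * (2 ^ p * θ ^ (-p)) *
          ∫ t in Ioo 0 θ, |f t| * t ^ p := by
          apply mul_le_mul (mul_le_mul h1 h2 (abs_nonneg _) (by positivity)) h3
            (abs_nonneg _)
          have : (0:ℝ) ≤ θ ^ (-p) := Real.rpow_nonneg hθ0.le _
          positivity
      _ = C₁ * θ ^ (-(1:ℝ)-p) * ∫ t in Ioo 0 θ, |f t| * t ^ p := by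
          rw [hC₁def, show (-(1:ℝ)-p) = (-1) + (-p) by ring, Real.rpow_add hθ0,
            Real.rpow_neg_one]
          ring
  -- measurability of h'
  have haesm : AEStronglyMeasurable h' (volume.restrict (Ioo 0 δ)) := by
    set g : ℝ → ℝ := fun θ => -(1 / (ε * Real.sin θ)) * ((Real.tan (θ/2))⁻¹ ^ p) *
      ∫ t in Ioo 0 θ, f t * Real.tan (t/2) ^ p with hgdef
    have hc1 : ContinuousOn (fun θ : ℝ => -(1 / (ε * Real.sin θ))) (Ioo 0 δ) := by
      apply ContinuousOn.neg
      apply ContinuousOn.div continuousOn_const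
        (continuousOn_const.mul Real.continuous_sin.continuousOn)
      intro θ hθ
      have : 0 < Real.sin θ := Real.sin_pos_of_pos_of_lt_pi hθ.1 (by linarith [hθ.2])
      exact mul_ne_zero hε0.ne' this.ne'
    have hc2 : ContinuousOn (fun θ : ℝ => (Real.tan (θ/2))⁻¹ ^ p) (Ioo 0 δ) := by
      have htancont : ContinuousOn (fun θ : ℝ => Real.tan (θ/2)) (Ioo 0 δ) := by
        intro θ hθ
        apply ContinuousAt.continuousWithinAt
        have h1 : ContinuousAt Real.tan (θ/2) := by
          apply Real.continuousAt_tan.2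
          apply ne_of_gt
          apply Real.cos_pos_of_mem_Ioo
          constructor <;> [linarith [hθ.1, hπ]; linarith [hθ.2, hδπ]]
        show ContinuousAt (Real.tan ∘ (fun θ : ℝ => θ/2)) θ
        exact ContinuousAt.comp (x := θ) h1 (by fun_prop)
      apply ContinuousOn.rpow_const
      · apply htancont.inv₀
        intro θ hθ
        exact (tan_half_pos hθ.1 (by linarith [hθ.2])).ne'
      · intro θ hθ
        exact Or.inr hp0.le
    have hc3 : ContinuousOn (fun θ : ℝ => ∫ t in Ioo 0 θ, f t * Real.tan (t/2) ^ p)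
        (Ioo 0 δ) := by
      have heq : (fun θ : ℝ => ∫ t in Ioo 0 θ, f t * Real.tan (t/2) ^ p)
          = fun θ : ℝ => ∫ t in Ioc 0 θ, f t * Real.tan (t/2) ^ p := by
        funext θ
        rw [Measure.restrict_congr_set Ioo_ae_eq_Ioc]
      rw [heq]
      have hInt : IntegrableOn (fun t => f t * Real.tan (t/2) ^ p) (Icc 0 δ) volume :=
        (integrableOn_Icc_iff_integrableOn_Ioo).2 (hw δ hδ0 le_rfl)
      exact (intervalIntegral.continuousOn_primitive hInt).mono Ioo_subset_Icc_self
    have hgm : AEStronglyMeasurable g (volume.restrict (Ioo 0 δ)) :=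
      (((hc1.mul hc2).mul hc3).aemeasurable measurableSet_Ioo).aestronglyMeasurable
    apply hgm.congr
    have hev : ∀ᵐ θ ∂(volume.restrict (Ioo 0 δ)), h' θ = g θ :=
      (ae_restrict_iff' measurableSet_Ioo).2 (ae_of_all _ fun θ hθ => hh' θ hθ)
    exact (Filter.EventuallyEq.symm hev)
  -- measurable representative of f
  set f' : ℝ → ℝ := hf.aestronglyMeasurable.mk f with hf'def
  have hf'meas : StronglyMeasurable f' := hf.aestronglyMeasurable.stronglyMeasurable_mk
  have hff' : f =ᵐ[volume.restrict (Ioo 0 π)] f' := hf.aestronglyMeasurable.ae_eq_mk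
  have hff'δ : f =ᵐ[volume.restrict (Ioo 0 δ)] f' :=
    ae_restrict_of_ae_restrict_of_subset hIooδπ hff'
  set F : ℝ → ENNReal := fun t => (‖f' t‖₊ : ENNReal) with hFdef
  have hFmeas : Measurable F := hf'meas.measurable.enorm
  set F2 : ℝ → ENNReal := fun t => F t ^ (2:ℝ) with hF2def
  have hF2meas : Measurable F2 := hFmeas.pow measurable_const
  have hF2fin : ∀ t, F2 t ≠ ⊤ := fun t =>
    ENNReal.rpow_ne_top_of_nonneg (by norm_num) ENNReal.coe_ne_top
  set B : ℝ → ENNReal := fun θ => ∫⁻ t in Ioo (0:ℝ) θ, F2 t * ENNReal.ofReal (t ^ (p + 1/2))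
    with hBdef
  have hBmono : Monotone B := fun a b hab => lintegral_mono_set (Ioo_subset_Ioo le_rfl hab)
  have hBmeas : Measurable B := hBmono.measurable
  set I : ENNReal := ∫⁻ t in Ioo (0:ℝ) π, ((‖f t‖₊ : ENNReal)) ^ (2:ℝ) with hIdef
  -- pointwise key bound
  have hkey : ∀ θ ∈ Ioo (0:ℝ) δ, ((‖h' θ‖₊ : ENNReal)) ^ (2:ℝ) ≤
      ENNReal.ofReal (C₁^2 * c₂) * (ENNReal.ofReal (θ ^ (-(3/2:ℝ) - p)) * B θ) := by
    intro θ hθ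
    obtain ⟨hθ0, hθδ⟩ := hθ
    have hfeqθ : ∀ᵐ t ∂(volume.restrict (Ioo 0 θ)), f t = f' t :=
      ae_restrict_of_ae_restrict_of_subset (Ioo_subset_Ioo le_rfl hθδ.le) hff'δ
    have hw2' : IntegrableOn (fun t => |f' t| * t ^ p) (Ioo 0 θ) volume := by
      apply (hw2 θ hθ0 hθδ.le).congr
      filter_upwards [hfeqθ] with t ht
      rw [ht]
    have hb : ENNReal.ofReal (∫ t in Ioo 0 θ, |f t| * t ^ p)
        = ∫⁻ t in Ioo (0:ℝ) θ, F t * ENNReal.ofReal (t ^ p) := by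
      have e0 : (∫ t in Ioo 0 θ, |f t| * t ^ p) = ∫ t in Ioo 0 θ, |f' t| * t ^ p := by
        apply integral_congr_ae
        filter_upwards [hfeqθ] with t ht
        rw [ht]
      rw [e0, ofReal_integral_eq_lintegral_ofReal hw2' ?_]
      · apply lintegral_congr_ae
        filter_upwards with t
        rw [ENNReal.ofReal_mul (abs_nonneg _), ← Real.enorm_eq_ofReal_abs]
        rfl
      · filter_upwards [ae_restrict_mem measurableSet_Ioo] with t ht
        exact mul_nonneg (abs_nonneg _) (Real.rpow_nonneg ht.1.le _)
    have ha : ((‖h' θ‖₊ : ENNReal)) ≤ ENNReal.ofReal (C₁ * θ ^ (-(1:ℝ)-p)) *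
        ∫⁻ t in Ioo (0:ℝ) θ, F t * ENNReal.ofReal (t ^ p) := by
      rw [← hb, ← enorm_eq_nnnorm, Real.enorm_eq_ofReal_abs, ← ENNReal.ofReal_mul
        (mul_nonneg hC₁0.le (Real.rpow_nonneg hθ0.le _))]
      exact ENNReal.ofReal_le_ofReal (hstepA θ ⟨hθ0, hθδ⟩)
    have e1 : ENNReal.ofReal (C₁ * θ ^ (-(1:ℝ)-p)) ^ (2:ℝ)
        = ENNReal.ofReal (C₁^2 * θ ^ ((-(1:ℝ)-p)*2)) := by
      rw [ENNReal.ofReal_rpow_of_nonneg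
        (mul_nonneg hC₁0.le (Real.rpow_nonneg hθ0.le _)) (by norm_num),
        Real.mul_rpow hC₁0.le (Real.rpow_nonneg hθ0.le _), ← Real.rpow_mul hθ0.le]
      congr 1
      rw [← Real.rpow_natCast C₁ 2]
      norm_num
    have e2 : ENNReal.ofReal (C₁^2 * θ ^ ((-(1:ℝ)-p)*2)) * ENNReal.ofReal (c₂ * θ ^ (p+1/2))
        = ENNReal.ofReal (C₁^2 * c₂) * ENNReal.ofReal (θ ^ (-(3/2:ℝ) - p)) := by
      rw [← ENNReal.ofReal_mul (mul_nonneg (sq_nonneg _) (Real.rpow_nonneg hθ0.le _)),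
        ← ENNReal.ofReal_mul (mul_nonneg (sq_nonneg _) hc₂0.le)]
      congr 1
      rw [show C₁^2 * θ ^ ((-(1:ℝ)-p)*2) * (c₂ * θ ^ (p+1/2))
        = C₁^2 * c₂ * (θ ^ ((-(1:ℝ)-p)*2) * θ ^ (p+1/2)) by ring, ← Real.rpow_add hθ0,
        show (-(1:ℝ)-p)*2 + (p+1/2) = -(3/2:ℝ) - p by ring]
    calc ((‖h' θ‖₊ : ENNReal)) ^ (2:ℝ)
        ≤ (ENNReal.ofReal (C₁ * θ ^ (-(1:ℝ)-p)) *
            ∫⁻ t in Ioo (0:ℝ) θ, F t * ENNReal.ofReal (t ^ p)) ^ (2:ℝ) :=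
          ENNReal.rpow_le_rpow ha (by norm_num)
      _ = ENNReal.ofReal (C₁ * θ ^ (-(1:ℝ)-p)) ^ (2:ℝ) *
            (∫⁻ t in Ioo (0:ℝ) θ, F t * ENNReal.ofReal (t ^ p)) ^ (2:ℝ) :=
          ENNReal.mul_rpow_of_nonneg _ _ (by norm_num)
      _ ≤ ENNReal.ofReal (C₁ * θ ^ (-(1:ℝ)-p)) ^ (2:ℝ) *
            (ENNReal.ofReal (c₂ * θ ^ (p + 1/2)) * B θ) := by
          apply mul_le_mul_right
          have hcs := cs_step hp hθ0 F hFmeas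
          rw [hc₂def]
          exact hcs
      _ = ENNReal.ofReal (C₁^2 * c₂) * (ENNReal.ofReal (θ ^ (-(3/2:ℝ) - p)) * B θ) := by
          rw [e1, ← mul_assoc, e2, mul_assoc]
  -- integrate the key bound
  have hS : (∫⁻ θ in Ioo (0:ℝ) δ, ((‖h' θ‖₊ : ENNReal)) ^ (2:ℝ)) ≤
      ENNReal.ofReal (C₁^2 * c₂) *
        ∫⁻ θ in Ioo (0:ℝ) δ, ENNReal.ofReal (θ ^ (-(3/2:ℝ) - p)) * B θ := by
    rw [← lintegral_const_mul' _ _ ENNReal.ofReal_ne_top]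
    apply setLIntegral_mono_ae ?_ (ae_of_all _ hkey)
    exact (measurable_const.mul (((measurable_id.pow
      (measurable_const : Measurable fun _ : ℝ => -(3/2:ℝ) - p)).ennreal_ofReal).mul
      hBmeas)).aemeasurable
  have hHardy : (∫⁻ θ in Ioo (0:ℝ) δ, ENNReal.ofReal (θ ^ (-(3/2:ℝ) - p)) * B θ)
      ≤ ENNReal.ofReal c₂ * ∫⁻ t in Ioo (0:ℝ) δ, F2 t := by
    rw [hc₂def]
    exact hardy_core hp hδ0 F2 hF2meas hF2fin
  have hIδ : (∫⁻ t in Ioo (0:ℝ) δ, F2 t) ≤ I := by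
    have e : (∫⁻ t in Ioo (0:ℝ) δ, F2 t)
        = ∫⁻ t in Ioo (0:ℝ) δ, ((‖f t‖₊ : ENNReal)) ^ (2:ℝ) := by
      apply lintegral_congr_ae
      filter_upwards [hff'δ] with t ht
      rw [hF2def, hFdef, ht]
    rw [e, hIdef]
    exact lintegral_mono_set hIooδπ
  have htotal : (∫⁻ θ in Ioo (0:ℝ) δ, ((‖h' θ‖₊ : ENNReal)) ^ (2:ℝ)) ≤
      ENNReal.ofReal ((C₁*c₂)^2) * I := by
    calc (∫⁻ θ in Ioo (0:ℝ) δ, ((‖h' θ‖₊ : ENNReal)) ^ (2:ℝ))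
        ≤ ENNReal.ofReal (C₁^2 * c₂) * (ENNReal.ofReal c₂ * I) :=
          hS.trans (mul_le_mul_right (hHardy.trans (mul_le_mul_right hIδ _)) _)
      _ = ENNReal.ofReal ((C₁*c₂)^2) * I := by
          rw [← mul_assoc, ← ENNReal.ofReal_mul (mul_nonneg (sq_nonneg _) hc₂0.le)]
          congr 2
          ring
  -- conclude
  have hnorm_h : eLpNorm h' 2 (volume.restrict (Ioo 0 δ))
      = (∫⁻ θ in Ioo (0:ℝ) δ, ((‖h' θ‖₊ : ENNReal)) ^ (2:ℝ)) ^ (1/2:ℝ) := by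
    rw [eLpNorm_eq_lintegral_rpow_enorm_toReal (by norm_num) (by norm_num)]
    norm_num
    rfl
  have hnorm_f : eLpNorm f 2 (volume.restrict (Ioo 0 π)) = I ^ (1/2:ℝ) := by
    rw [eLpNorm_eq_lintegral_rpow_enorm_toReal (by norm_num) (by norm_num), hIdef]
    norm_num
    rfl
  have hK2 : ENNReal.ofReal ((C₁*c₂)^2) ^ (1/2:ℝ) = ENNReal.ofReal (C₁*c₂) := by
    rw [ENNReal.ofReal_rpow_of_nonneg (sq_nonneg _) (by norm_num)]
    congr 1
    rw [← Real.rpow_natCast (C₁*c₂) 2, ← Real.rpow_mul (mul_pos hC₁0 hc₂0).le]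
    norm_num
  have hmain : eLpNorm h' 2 (volume.restrict (Ioo 0 δ)) ≤
      ENNReal.ofReal (C₁*c₂) * eLpNorm f 2 (volume.restrict (Ioo 0 π)) := by
    rw [hnorm_h, hnorm_f, ← hK2, ← ENNReal.mul_rpow_of_nonneg _ _ (by norm_num)]
    exact ENNReal.rpow_le_rpow htotal (by norm_num)
  have hne : ENNReal.ofReal (C₁*c₂) * eLpNorm f 2 (volume.restrict (Ioo 0 π)) ≠ ⊤ :=
    (ENNReal.mul_lt_top ENNReal.ofReal_lt_top hf.2).ne
  refine ⟨⟨haesm, lt_of_le_of_lt hmain (lt_of_le_of_ne le_top hne)⟩, ?_⟩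
  have hmono := ENNReal.toReal_mono hne hmain
  rwa [ENNReal.toReal_mul, ENNReal.toReal_ofReal (mul_pos hC₁0 hc₂0).le] at hmono
end

section
/- Let ε ∈ (0,2) and suppose h: (0,π) → ℂ satisfies h(θ) = (cot(θ/2))^{1/ε}(k₂ - ∫_{π/2}^θ f(t)(tan(t/2))^{1/ε} dt) + ∫₀^θ f(t) dt + k₁ with f ∈ L²(0,π). If C₁ := lim_{θ→0⁺}(k₂ - ∫_{π/2}^θ f(t)(tan(t/2))^{1/ε} dt) is nonzero, then h ∉ L²(0,π). -/
open MeasureTheory Set Real Filter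

/-- Let `ε ∈ (0,2)`, `f ∈ L²(0,π)` and suppose
`h(θ) = (cot(θ/2))^(1/ε) (k₂ - ∫_{π/2}^θ f (tan(t/2))^(1/ε) dt) + ∫₀^θ f + k₁` on `(0,π)`.
If `C₁ = lim_{θ→0⁺} (k₂ - ∫_{π/2}^θ f (tan(t/2))^(1/ε) dt)` is nonzero, then `h ∉ L²(0,π)`. -/
theorem stmt4 (ε : ℝ) (hε : ε ∈ Set.Ioo (0:ℝ) 2)
    (f : ℝ → ℝ) (hf : MemLp f 2 (volume.restrict (Ioo 0 π)))
    (k₁ k₂ C₁ : ℝ) (h : ℝ → ℝ)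
    (hh : ∀ θ ∈ Ioo (0:ℝ) π,
      h θ = ((Real.tan (θ/2))⁻¹ ^ (1/ε)) *
              (k₂ - ∫ t in (π/2)..θ, f t * (Real.tan (t/2)) ^ (1/ε))
            + (∫ t in (0:ℝ)..θ, f t) + k₁)
    (hC₁ : Tendsto (fun θ => k₂ - ∫ t in (π/2)..θ, f t * (Real.tan (t/2)) ^ (1/ε))
            (nhdsWithin 0 (Ioi 0)) (nhds C₁))
    (hC₁0 : C₁ ≠ 0) :
    ¬ MemLp h 2 (volume.restrict (Ioo 0 π)) := by
  obtain ⟨hε0, hε2⟩ := hε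
  intro hmem
  haveI : IsFiniteMeasure (volume.restrict (Ioo (0:ℝ) π)) :=
    ⟨by rw [Measure.restrict_apply_univ]; exact measure_Ioo_lt_top⟩
  -- f is integrable on (0, π)
  have hfi : Integrable f (volume.restrict (Ioo 0 π)) := hf.integrable one_le_two
  set M : ℝ := ∫ t in Ioo (0:ℝ) π, |f t| with hM
  have hM0 : 0 ≤ M := integral_nonneg fun t => abs_nonneg _
  -- Bound on the primitive of f
  have hF : ∀ θ ∈ Ioo (0:ℝ) π, |∫ t in (0:ℝ)..θ, f t| ≤ M := by
    intro θ hθ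
    rw [intervalIntegral.integral_of_le hθ.1.le]
    calc |∫ t in Ioc (0:ℝ) θ, f t| ≤ ∫ t in Ioc (0:ℝ) θ, |f t| := by
          simpa [Real.norm_eq_abs] using
            norm_integral_le_integral_norm (μ := volume.restrict (Ioc 0 θ)) f
      _ ≤ M := by
          refine setIntegral_mono_set hfi.abs ?_ ?_
          · exact Filter.Eventually.of_forall fun t => abs_nonneg _
          · exact HasSubset.Subset.eventuallyLE fun t ht => ⟨ht.1, lt_of_le_of_lt ht.2 hθ.2⟩
  set g : ℝ → ℝ := fun θ => k₂ - ∫ t in (π/2)..θ, f t * (Real.tan (t/2)) ^ (1/ε) with hg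
  have hC₁pos : 0 < |C₁| := abs_pos.mpr hC₁0
  -- near 0, |g θ| ≥ |C₁|/2
  have hev : ∀ᶠ θ in nhdsWithin (0:ℝ) (Ioi 0), |C₁|/2 < |g θ| :=
    (hC₁.abs).eventually_const_lt (by linarith)
  obtain ⟨δ₁, hδ₁pos, hδ₁⟩ := mem_nhdsGT_iff_exists_Ioo_subset.mp hev
  set B : ℝ := M + |k₁| + 1 with hB
  have hBpos : 0 < B := by positivity
  set δ₃ : ℝ := (4*B/|C₁|) ^ (-ε) with hδ₃
  have hbase : 0 < 4*B/|C₁| := by positivity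
  have hδ₃pos : 0 < δ₃ := Real.rpow_pos_of_pos hbase _
  set δ : ℝ := min δ₁ (min δ₃ (π/2)) with hδ
  have hδpos : 0 < δ := lt_min hδ₁pos (lt_min hδ₃pos (by positivity))
  have hδπ2 : δ ≤ π/2 := le_trans (min_le_right _ _) (min_le_right _ _)
  have hδπ : δ ≤ π := hδπ2.trans (by linarith [Real.pi_pos])
  -- main pointwise lower bound
  have key : ∀ θ ∈ Ioo (0:ℝ) δ, (|C₁|/4)^2 * θ ^ (-(2/ε)) ≤ (h θ)^2 := by
    intro θ hθ
    obtain ⟨hθ0, hθδ⟩ := hθ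
    have hθπ : θ ∈ Ioo (0:ℝ) π := ⟨hθ0, lt_of_lt_of_le hθδ hδπ⟩
    have hθπ2 : θ < π/2 := lt_of_lt_of_le hθδ hδπ2
    have hhalf0 : 0 < θ/2 := by linarith
    have hhalf4 : θ/2 ≤ π/4 := by linarith
    have hpi4 : (0:ℝ) < π/4 := by positivity
    have htanpos : 0 < Real.tan (θ/2) :=
      Real.tan_pos_of_pos_of_lt_pi_div_two hhalf0 (by linarith [Real.pi_pos])
    -- tan (θ/2) ≤ θ
    have hcos : (1:ℝ)/2 ≤ Real.cos (θ/2) := by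
      have h1 : Real.cos (π/4) ≤ Real.cos (θ/2) :=
        Real.cos_le_cos_of_nonneg_of_le_pi hhalf0.le (by linarith [Real.pi_pos]) hhalf4
      have h2 : Real.cos (π/4) = Real.sqrt 2 / 2 := Real.cos_pi_div_four
      have h3 : (1:ℝ) ≤ Real.sqrt 2 := by
        have := Real.sqrt_le_sqrt (by norm_num : (1:ℝ) ≤ 2)
        rwa [Real.sqrt_one] at this
      linarith
    have htanle : Real.tan (θ/2) ≤ θ := by
      rw [Real.tan_eq_sin_div_cos]
      have hsin : Real.sin (θ/2) ≤ θ/2 := Real.sin_le hhalf0.le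
      have : Real.sin (θ/2) / Real.cos (θ/2) ≤ (θ/2) / (1/2) :=
        div_le_div₀ (by linarith) hsin (by norm_num) hcos
      linarith [this]
    -- θ^(-1/ε) ≤ (tan (θ/2))⁻¹ ^ (1/ε)
    have hT : θ ^ (-(1/ε)) ≤ (Real.tan (θ/2))⁻¹ ^ (1/ε) := by
      rw [Real.rpow_neg hθ0.le, ← Real.inv_rpow hθ0.le]
      refine Real.rpow_le_rpow (by positivity) ?_ (by positivity)
      exact inv_anti₀ htanpos htanle
    have hgθ : |C₁|/2 < |g θ| := hδ₁ ⟨hθ0, lt_of_lt_of_le hθδ (min_le_left _ _)⟩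
    -- θ^(-1/ε) ≥ 4B/|C₁|
    have hθδ₃ : θ ≤ δ₃ := hθδ.le.trans (le_trans (min_le_right _ _) (min_le_left _ _))
    have hpow : 4*B/|C₁| ≤ θ ^ (-(1/ε)) := by
      have h1 : δ₃ ^ (-(1/ε)) ≤ θ ^ (-(1/ε)) :=
        Real.rpow_le_rpow_of_nonpos hθ0 hθδ₃ (neg_nonpos.mpr (by positivity : (0:ℝ) ≤ 1/ε))
      have h2 : δ₃ ^ (-(1/ε)) = 4*B/|C₁| := by
        rw [hδ₃, ← Real.rpow_mul hbase.le]
        rw [show (-ε) * (-(1/ε)) = 1 by field_simp]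
        exact Real.rpow_one _
      linarith
    have hTpos : 0 ≤ θ ^ (-(1/ε)) := Real.rpow_nonneg hθ0.le _
    -- lower bound on |h θ|
    have hlow : |C₁|/4 * θ ^ (-(1/ε)) ≤ |h θ| := by
      have hhθ := hh θ hθπ
      set T := (Real.tan (θ/2))⁻¹ ^ (1/ε) with hTdef
      have hT0 : 0 ≤ T := Real.rpow_nonneg (by positivity) _
      have habs1 : |T * g θ| ≤ |h θ| + |(∫ t in (0:ℝ)..θ, f t) + k₁| := by
        have : T * g θ = h θ - ((∫ t in (0:ℝ)..θ, f t) + k₁) := by rw [hhθ]; ring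
        rw [this]
        exact (abs_sub _ _)
      have habs2 : |(∫ t in (0:ℝ)..θ, f t) + k₁| ≤ M + |k₁| :=
        (abs_add_le _ _).trans (by linarith [hF θ hθπ])
      have hmul : θ ^ (-(1/ε)) * (|C₁|/2) ≤ T * |g θ| :=
        mul_le_mul hT (le_of_lt hgθ) (by positivity) hT0
      have hmul2 : B ≤ θ ^ (-(1/ε)) * (|C₁|/4) := by
        have := mul_le_mul_of_nonneg_right hpow (le_of_lt (by positivity : (0:ℝ) < |C₁|/4))
        calc B = 4*B/|C₁| * (|C₁|/4) := by field_simp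
          _ ≤ θ ^ (-(1/ε)) * (|C₁|/4) := this
      have := abs_mul T (g θ)
      rw [abs_of_nonneg hT0] at this
      nlinarith [abs_nonneg (h θ)]
    have hsq : (|C₁|/4 * θ ^ (-(1/ε)))^2 ≤ |h θ|^2 :=
      pow_le_pow_left₀ (by positivity) hlow 2
    rw [sq_abs] at hsq
    calc (|C₁|/4)^2 * θ ^ (-(2/ε)) = (|C₁|/4 * θ ^ (-(1/ε)))^2 := by
          rw [mul_pow, ← Real.rpow_natCast (θ ^ (-(1/ε))) 2, ← Real.rpow_mul hθ0.le]
          congr 1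
          push_cast
          ring
      _ ≤ (h θ)^2 := hsq
  -- h² is integrable on (0, δ)
  have hsqint : IntegrableOn (fun x => h x ^ 2) (Ioo (0:ℝ) π) volume :=
    (memLp_two_iff_integrable_sq hmem.1).mp hmem
  have hsqδ : IntegrableOn (fun x => h x ^ 2) (Ioo (0:ℝ) δ) volume :=
    hsqint.mono_set (Ioo_subset_Ioo le_rfl hδπ)
  -- hence the rpow is integrable on (0, δ) — contradiction
  have hφ : IntegrableOn (fun θ => (|C₁|/4)^2 * θ ^ (-(2/ε))) (Ioo (0:ℝ) δ) volume := by
    refine Integrable.mono hsqδ ?_ ?_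
    · refine (ContinuousOn.aestronglyMeasurable ?_ measurableSet_Ioo)
      refine continuousOn_const.mul fun x hx => ?_
      exact (Real.continuousAt_rpow_const x _ (Or.inl (ne_of_gt hx.1))).continuousWithinAt
    · rw [ae_restrict_iff' measurableSet_Ioo]
      refine Filter.Eventually.of_forall fun θ hθ => ?_
      have h1 := key θ hθ
      have h2 : 0 ≤ (|C₁|/4)^2 * θ ^ (-(2/ε)) := by
        have := Real.rpow_nonneg hθ.1.le (-(2/ε)); positivity
      rw [Real.norm_eq_abs, Real.norm_eq_abs, abs_of_nonneg h2, abs_of_nonneg (sq_nonneg (h θ))]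
      exact h1
  have hc : ((|C₁|/4)^2 : ℝ) ≠ 0 := by positivity
  have hφ' : IntegrableOn (fun θ => θ ^ (-(2/ε))) (Ioo (0:ℝ) δ) volume := by
    have := hφ.const_mul (((|C₁|/4)^2)⁻¹)
    exact (by simpa [← mul_assoc, inv_mul_cancel₀ hc] using this :
      Integrable (fun x => x ^ (-(2 / ε))) (volume.restrict (Ioo 0 δ)))
  rw [intervalIntegral.integrableOn_Ioo_rpow_iff hδpos] at hφ'
  have : (1:ℝ) < 2/ε := (one_lt_div hε0).mpr hε2
  linarith
end

section
/- Let ε ∈ (0,2), f ∈ L²(-π,π) with ∫_{-π}^π f = 0, and let h(θ) = -|cot(θ/2)|^{1/ε} ∫₀^θ f(t)|tan(t/2)|^{1/ε} dt + ∫₀^θ f(t) dt + k₁ on (-π,0)∪(0,π). Then lim_{θ→0⁺} h(θ) = lim_{θ→0⁻} h(θ) = k₁, lim_{θ→π⁻} h(θ) = k₁ + ∫₀^π f(t) dt, and lim_{θ→-π⁺} h(θ) = k₁ + ∫₀^{-π} f(t) dt; consequently h extends to a continuous periodic function on [-π,π] (h(π) = h(-π)) precisely because ∫_{-π}^π f =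 0. -/
open MeasureTheory Set Real Filter
open scoped Interval

lemma abs_tan_half {t : ℝ} (ht : |t| < π) : |Real.tan (t/2)| = Real.tan (|t|/2) := by
  rcases le_or_gt 0 t with h | h
  · rw [abs_of_nonneg h, abs_of_nonneg]
    exact Real.tan_nonneg_of_nonneg_of_le_pi_div_two (by linarith)
      (by rw [abs_of_nonneg h] at ht; linarith)
  · rw [abs_of_neg h]
    rw [show -t/2 = -(t/2) by ring, Real.tan_neg, ← abs_neg (Real.tan (t/2)), abs_of_nonneg]
    rw [← Real.tan_neg, show -(t/2) = -t/2 by ring]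
    exact Real.tan_nonneg_of_nonneg_of_le_pi_div_two (by linarith)
      (by rw [abs_of_neg h] at ht; linarith)

lemma tan_half_mono {s u : ℝ} (h : |s| ≤ |u|) (hu : |u| < π) :
    |Real.tan (s/2)| ≤ Real.tan (|u|/2) := by
  rw [abs_tan_half (lt_of_le_of_lt h hu)]
  have h1 : |s|/2 ∈ Ioo (-(π/2)) (π/2) :=
    ⟨by have := abs_nonneg s; have := Real.pi_pos; linarith,
     by have := le_trans h hu.le; linarith⟩
  have h2 : |u|/2 ∈ Ioo (-(π/2)) (π/2) :=
    ⟨by have := abs_nonneg u; have := Real.pi_pos; linarith, by linarith⟩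
  exact Real.strictMonoOn_tan.monotoneOn h1 h2 (by linarith)

lemma tan_half_pos_s16 {u : ℝ} (hu : |u| < π) (hu0 : u ≠ 0) : 0 < |Real.tan (u/2)| := by
  rw [abs_tan_half hu]
  exact Real.tan_pos_of_pos_of_lt_pi_div_two (by positivity) (by linarith)

lemma w_contOn {p : ℝ} (hp : 0 < p) :
    ContinuousOn (fun t => |Real.tan (t/2)| ^ p) (Ioo (-π) π) := by
  intro t ht
  apply ContinuousAt.continuousWithinAt
  have hc : Real.cos (t/2) ≠ 0 := by
    have := Real.cos_pos_of_mem_Ioo (x := t/2)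
      ⟨by simpa using (by constructor <;> [linarith [ht.1]; linarith [ht.2] ] :
        -(π/2) < t/2 ∧ t/2 < π/2).1, by linarith [ht.2]⟩
    exact ne_of_gt this
  have h0 : ContinuousAt (fun t : ℝ => t/2) t := continuousAt_id.div_const 2
  have h2 : ContinuousAt (fun s : ℝ => Real.tan (s/2)) t := by
    exact ContinuousAt.comp (g := Real.tan) (Real.continuousAt_tan.mpr hc) h0
  have h1 : ContinuousAt (fun t : ℝ => |Real.tan (t/2)|) t :=
    ContinuousAt.comp (g := abs) continuous_abs.continuousAt h2
  exact ContinuousAt.comp (g := fun x : ℝ => x ^ p)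
    (Real.continuousAt_rpow_const _ _ (Or.inr hp.le)) h1

lemma w_intervalInt {p : ℝ} (hp : 0 < p) {f : ℝ → ℝ}
    (hf1 : IntegrableOn f (Ioo (-π) π))
    {a b : ℝ} (ha : a ∈ Ioo (-π) π) (hb : b ∈ Ioo (-π) π) :
    IntervalIntegrable (fun t => f t * |Real.tan (t/2)| ^ p) volume a b := by
  have hsub : uIcc a b ⊆ Ioo (-π) π := Set.ordConnected_Ioo.uIcc_subset ha hb
  apply MeasureTheory.IntegrableOn.intervalIntegrable
  exact MeasureTheory.IntegrableOn.mul_continuousOn (hf1.mono_set hsub)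
    ((w_contOn hp).mono hsub) isCompact_uIcc

lemma key' {p : ℝ} (hp : 0 < p) {f : ℝ → ℝ} {a θ : ℝ}
    (hθ : |θ| < π) (hθ0 : θ ≠ 0)
    (hmono : ∀ t ∈ Set.uIcc a θ, |t| ≤ |θ|)
    (hf1 : IntegrableOn f (Ioo (-π) π)) :
    |Real.tan (θ/2)|⁻¹ ^ p * |∫ t in a..θ, f t * |Real.tan (t/2)| ^ p| ≤
      ∫ t in Ι a θ, |f t| := by
  have hsub' : uIcc a θ ⊆ Ioo (-π) π := by
    intro t ht
    have := abs_lt.mp (lt_of_le_of_lt (hmono t ht) hθ)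
    exact ⟨this.1, this.2⟩
  have hintIcc : IntegrableOn (fun t => |f t|) (uIcc a θ) := (hf1.mono_set hsub').abs
  have hint : IntegrableOn (fun t => |f t|) (Ι a θ) := hintIcc.mono_set uIoc_subset_uIcc
  set A : ℝ := |Real.tan (θ/2)| with hA
  have hA0 : 0 < A := tan_half_pos_s16 hθ hθ0
  have hw : ∀ t, (0:ℝ) ≤ |Real.tan (t/2)| ^ p := fun t => Real.rpow_nonneg (abs_nonneg _) _
  have h1 : |∫ t in a..θ, f t * |Real.tan (t/2)| ^ p| ≤
      ∫ t in Ι a θ, |f t| * |Real.tan (t/2)| ^ p := by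
    have := intervalIntegral.norm_integral_le_integral_norm_uIoc
      (f := fun t => f t * |Real.tan (t/2)| ^ p) (a := a) (b := θ) (μ := volume)
    simpa [Real.norm_eq_abs, abs_mul, abs_of_nonneg (hw _)] using this
  have hint2 : IntegrableOn (fun t => |f t| * |Real.tan (t/2)| ^ p) (Ι a θ) := by
    exact (MeasureTheory.IntegrableOn.mul_continuousOn hintIcc
      ((w_contOn hp).mono hsub') isCompact_uIcc).mono_set uIoc_subset_uIcc
  have h2 : (∫ t in Ι a θ, |f t| * |Real.tan (t/2)| ^ p) ≤
      ∫ t in Ι a θ, |f t| * A ^ p := by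
    apply MeasureTheory.setIntegral_mono_on hint2 (hint.mul_const _)
      measurableSet_uIoc
    intro t ht
    have := tan_half_mono (hmono t (uIoc_subset_uIcc ht)) hθ
    rw [← abs_tan_half hθ] at this
    exact mul_le_mul_of_nonneg_left (Real.rpow_le_rpow (abs_nonneg _) this hp.le)
      (abs_nonneg _)
  have h3 : (∫ t in Ι a θ, |f t| * A ^ p) = A ^ p * ∫ t in Ι a θ, |f t| := by
    rw [MeasureTheory.integral_mul_const]; ring
  calc A⁻¹ ^ p * |∫ t in a..θ, f t * |Real.tan (t/2)| ^ p|
      ≤ A⁻¹ ^ p * (A ^ p * ∫ t in Ι a θ, |f t|) := by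
        apply mul_le_mul_of_nonneg_left _ (Real.rpow_nonneg (by positivity) _)
        rw [← h3]; exact h1.trans h2
    _ = ∫ t in Ι a θ, |f t| := by
        rw [← mul_assoc, ← Real.mul_rpow (by positivity) hA0.le,
          inv_mul_cancel₀ hA0.ne', Real.one_rpow, one_mul]

lemma T_pi {p : ℝ} (hp : 0 < p) {f : ℝ → ℝ} (hf1 : IntegrableOn f (Ioo (-π) π)) :
    Tendsto (fun θ => |Real.tan (θ/2)|⁻¹ ^ p *
      ∫ t in (0:ℝ)..θ, f t * |Real.tan (t/2)| ^ p) (nhdsWithin π (Iio π)) (nhds 0) := by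
  have hπ := Real.pi_pos
  set g : ℝ → ℝ := (Ioo (-π) π).indicator f with hgdef
  have hg : Integrable g volume := hf1.integrable_indicator measurableSet_Ioo
  have hgabs : Integrable (fun t => |g t|) volume := hg.abs
  set G : ℝ → ℝ := fun x => ∫ t in (0:ℝ)..x, |g t| with hGdef
  have hGc : Continuous G := hgabs.continuous_primitive 0
  -- tail tendsto
  have htail : Tendsto (fun a => ∫ t in Ioc a π, |g t|) (nhdsWithin π (Iio π)) (nhds 0) := by
    have h1 : Tendsto (fun a => G π - G a) (nhdsWithin π (Iio π)) (nhds 0) := by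
      have hc : Continuous (fun a : ℝ => G π - G a) := continuous_const.sub hGc
      have := (hc.tendsto π).mono_left (nhdsWithin_le_nhds (s := Iio π))
      simpa using this
    apply h1.congr'
    filter_upwards [self_mem_nhdsWithin] with a (ha : a < π)
    have := intervalIntegral.integral_add_adjacent_intervals
      (a := (0:ℝ)) (b := a) (c := π) (f := fun t => |g t|) (μ := volume)
      hgabs.intervalIntegrable hgabs.intervalIntegrable
    rw [show (∫ t in Ioc a π, |g t|) = ∫ t in a..π, |g t| by
      rw [intervalIntegral.integral_of_le ha.le] ]
    rw [hGdef]; simp only [← this]; ring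
  -- tan tendsto
  have htan : Tendsto (fun θ : ℝ => |Real.tan (θ/2)|) (nhdsWithin π (Iio π)) atTop := by
    apply tendsto_abs_atTop_atTop.comp
    apply Real.tendsto_tan_pi_div_two.comp
    apply tendsto_nhdsWithin_of_tendsto_nhds_of_eventually_within
    · exact ((continuous_id.div_const 2).tendsto π).mono_left nhdsWithin_le_nhds
    · filter_upwards [self_mem_nhdsWithin] with a (ha : a < π)
      simp only [Set.mem_Iio]
      linarith
  have hpow : Tendsto (fun θ : ℝ => (|Real.tan (θ/2)| ^ p)⁻¹)
      (nhdsWithin π (Iio π)) (nhds 0) :=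
    tendsto_inv_atTop_zero.comp ((tendsto_rpow_atTop hp).comp htan)
  rw [NormedAddCommGroup.tendsto_nhds_zero]
  intro η hη
  -- choose a
  have hev : ∀ᶠ a in nhdsWithin π (Iio π),
      (∫ t in Ioc a π, |g t|) < η/2 ∧ 0 < a ∧ a < π := by
    filter_upwards [htail.eventually (gt_mem_nhds (half_pos hη)),
      eventually_nhdsWithin_of_eventually_nhds (eventually_gt_nhds hπ),
      self_mem_nhdsWithin] with a h1 h2 h3
    exact ⟨h1, h2, h3⟩
  obtain ⟨a, hta, ha0, haπ⟩ := hev.exists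
  have hamem : a ∈ Ioo (-π) π := ⟨by linarith, haπ⟩
  have h0mem : (0:ℝ) ∈ Ioo (-π) π := ⟨by linarith, hπ⟩
  set C : ℝ := |∫ t in (0:ℝ)..a, f t * |Real.tan (t/2)| ^ p| with hC
  have h1 : Tendsto (fun θ : ℝ => (|Real.tan (θ/2)| ^ p)⁻¹ * C)
      (nhdsWithin π (Iio π)) (nhds 0) := by
    simpa using hpow.mul_const C
  filter_upwards [h1.eventually (gt_mem_nhds (half_pos hη)),
    eventually_nhdsWithin_of_eventually_nhds (eventually_gt_nhds haπ),
    self_mem_nhdsWithin] with θ hsmall (hθa : a < θ) (hθπ : θ < π)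
  have hθmem : θ ∈ Ioo (-π) π := ⟨by linarith, hθπ⟩
  have hθ0 : θ ≠ 0 := ne_of_gt (lt_trans ha0 hθa)
  have habs : |θ| < π := abs_lt.mpr ⟨hθmem.1, hθmem.2⟩
  -- split the integral
  have hsplit : (∫ t in (0:ℝ)..θ, f t * |Real.tan (t/2)| ^ p) =
      (∫ t in (0:ℝ)..a, f t * |Real.tan (t/2)| ^ p) +
      ∫ t in a..θ, f t * |Real.tan (t/2)| ^ p :=
    (intervalIntegral.integral_add_adjacent_intervals
      (w_intervalInt hp hf1 h0mem hamem) (w_intervalInt hp hf1 hamem hθmem)).symm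
  have hmono : ∀ t ∈ Set.uIcc a θ, |t| ≤ |θ| := by
    intro t ht
    rw [Set.uIcc_of_le hθa.le] at ht
    rw [abs_of_nonneg (by linarith [ht.1] : (0:ℝ) ≤ t), abs_of_nonneg (by linarith : (0:ℝ) ≤ θ)]
    exact ht.2
  have hkey := key' hp habs hθ0 hmono hf1
  -- relate ∫ |f| to ∫ |g|
  have hIg : (∫ t in Ι a θ, |f t|) = ∫ t in Ioc a θ, |g t| := by
    rw [Set.uIoc_of_le hθa.le]
    apply MeasureTheory.setIntegral_congr_fun measurableSet_Ioc
    intro t ht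
    have : t ∈ Ioo (-π) π := ⟨by linarith [ht.1], by linarith [ht.2]⟩
    show |f t| = |(Ioo (-π) π).indicator f t|
    rw [Set.indicator_of_mem this]
  have hIle : (∫ t in Ioc a θ, |g t|) ≤ ∫ t in Ioc a π, |g t| := by
    apply MeasureTheory.setIntegral_mono_set (hgabs.integrableOn)
      (Filter.Eventually.of_forall fun t => abs_nonneg _)
    exact HasSubset.Subset.eventuallyLE (Set.Ioc_subset_Ioc_right hθπ.le)
  have hA0 : (0:ℝ) < |Real.tan (θ/2)| := tan_half_pos_s16 habs hθ0
  have hinv : |Real.tan (θ/2)|⁻¹ ^ p = (|Real.tan (θ/2)| ^ p)⁻¹ :=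
    Real.inv_rpow (abs_nonneg _) p
  calc ‖|Real.tan (θ/2)|⁻¹ ^ p * ∫ t in (0:ℝ)..θ, f t * |Real.tan (t/2)| ^ p‖
      = |Real.tan (θ/2)|⁻¹ ^ p * |∫ t in (0:ℝ)..θ, f t * |Real.tan (t/2)| ^ p| := by
        rw [Real.norm_eq_abs, abs_mul, abs_of_nonneg (Real.rpow_nonneg (by positivity) p)]
    _ ≤ |Real.tan (θ/2)|⁻¹ ^ p * (C + |∫ t in a..θ, f t * |Real.tan (t/2)| ^ p|) := by
        apply mul_le_mul_of_nonneg_left _ (Real.rpow_nonneg (by positivity) p)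
        rw [hsplit]; exact abs_add_le _ _
    _ = (|Real.tan (θ/2)| ^ p)⁻¹ * C +
        |Real.tan (θ/2)|⁻¹ ^ p * |∫ t in a..θ, f t * |Real.tan (t/2)| ^ p| := by
        rw [mul_add, hinv]
    _ ≤ (|Real.tan (θ/2)| ^ p)⁻¹ * C + ∫ t in Ioc a π, |g t| := by
        apply add_le_add_right
        calc |Real.tan (θ/2)|⁻¹ ^ p * |∫ t in a..θ, f t * |Real.tan (t/2)| ^ p|
            ≤ ∫ t in Ι a θ, |f t| := hkey
          _ = ∫ t in Ioc a θ, |g t| := hIg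
          _ ≤ ∫ t in Ioc a π, |g t| := hIle
    _ < η/2 + η/2 := by
        apply add_lt_add_of_lt_of_le hsmall hta.le
    _ = η := by ring

lemma T_negpi {p : ℝ} (hp : 0 < p) {f : ℝ → ℝ} (hf1 : IntegrableOn f (Ioo (-π) π)) :
    Tendsto (fun θ => |Real.tan (θ/2)|⁻¹ ^ p *
      ∫ t in (0:ℝ)..θ, f t * |Real.tan (t/2)| ^ p) (nhdsWithin (-π) (Ioi (-π))) (nhds 0) := by
  have hπ := Real.pi_pos
  set g : ℝ → ℝ := (Ioo (-π) π).indicator f with hgdef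
  have hg : Integrable g volume := hf1.integrable_indicator measurableSet_Ioo
  have hgabs : Integrable (fun t => |g t|) volume := hg.abs
  set G : ℝ → ℝ := fun x => ∫ t in (0:ℝ)..x, |g t| with hGdef
  have hGc : Continuous G := hgabs.continuous_primitive 0
  have htail : Tendsto (fun a => ∫ t in Ioc (-π) a, |g t|)
      (nhdsWithin (-π) (Ioi (-π))) (nhds 0) := by
    have h1 : Tendsto (fun a => G a - G (-π)) (nhdsWithin (-π) (Ioi (-π))) (nhds 0) := by
      have hc : Continuous (fun a : ℝ => G a - G (-π)) := hGc.sub continuous_const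
      have := (hc.tendsto (-π)).mono_left (nhdsWithin_le_nhds (s := Ioi (-π)))
      simpa using this
    apply h1.congr'
    filter_upwards [self_mem_nhdsWithin] with a (ha : -π < a)
    have := intervalIntegral.integral_add_adjacent_intervals
      (a := (0:ℝ)) (b := -π) (c := a) (f := fun t => |g t|) (μ := volume)
      hgabs.intervalIntegrable hgabs.intervalIntegrable
    rw [show (∫ t in Ioc (-π) a, |g t|) = ∫ t in (-π)..a, |g t| by
      rw [intervalIntegral.integral_of_le ha.le] ]
    rw [hGdef]; simp only [← this]; ring
  have htan : Tendsto (fun θ : ℝ => |Real.tan (θ/2)|) (nhdsWithin (-π) (Ioi (-π))) atTop := by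
    apply tendsto_abs_atBot_atTop.comp
    apply Real.tendsto_tan_neg_pi_div_two.comp
    apply tendsto_nhdsWithin_of_tendsto_nhds_of_eventually_within
    · have := ((continuous_id.div_const 2).tendsto (-π)).mono_left
        (nhdsWithin_le_nhds (s := Ioi (-π)))
      simpa [neg_div] using this
    · filter_upwards [self_mem_nhdsWithin] with a (ha : -π < a)
      simp only [Set.mem_Ioi]
      linarith
  have hpow : Tendsto (fun θ : ℝ => (|Real.tan (θ/2)| ^ p)⁻¹)
      (nhdsWithin (-π) (Ioi (-π))) (nhds 0) :=
    tendsto_inv_atTop_zero.comp ((tendsto_rpow_atTop hp).comp htan)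
  rw [NormedAddCommGroup.tendsto_nhds_zero]
  intro η hη
  have hev : ∀ᶠ a in nhdsWithin (-π) (Ioi (-π)),
      (∫ t in Ioc (-π) a, |g t|) < η/2 ∧ -π < a ∧ a < 0 := by
    filter_upwards [htail.eventually (gt_mem_nhds (half_pos hη)),
      eventually_nhdsWithin_of_eventually_nhds (eventually_lt_nhds (by linarith : -π < (0:ℝ))),
      self_mem_nhdsWithin] with a h1 h2 h3
    exact ⟨h1, h3, h2⟩
  obtain ⟨a, hta, haπ, ha0⟩ := hev.exists
  have hamem : a ∈ Ioo (-π) π := ⟨haπ, by linarith⟩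
  have h0mem : (0:ℝ) ∈ Ioo (-π) π := ⟨by linarith, hπ⟩
  set C : ℝ := |∫ t in (0:ℝ)..a, f t * |Real.tan (t/2)| ^ p| with hC
  have h1 : Tendsto (fun θ : ℝ => (|Real.tan (θ/2)| ^ p)⁻¹ * C)
      (nhdsWithin (-π) (Ioi (-π))) (nhds 0) := by
    simpa using hpow.mul_const C
  filter_upwards [h1.eventually (gt_mem_nhds (half_pos hη)),
    eventually_nhdsWithin_of_eventually_nhds (eventually_lt_nhds haπ),
    self_mem_nhdsWithin] with θ hsmall (hθa : θ < a) (hθπ : -π < θ)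
  have hθmem : θ ∈ Ioo (-π) π := ⟨hθπ, by linarith⟩
  have hθ0 : θ ≠ 0 := ne_of_lt (by linarith)
  have habs : |θ| < π := abs_lt.mpr ⟨hθmem.1, hθmem.2⟩
  have hsplit : (∫ t in (0:ℝ)..θ, f t * |Real.tan (t/2)| ^ p) =
      (∫ t in (0:ℝ)..a, f t * |Real.tan (t/2)| ^ p) +
      ∫ t in a..θ, f t * |Real.tan (t/2)| ^ p :=
    (intervalIntegral.integral_add_adjacent_intervals
      (w_intervalInt hp hf1 h0mem hamem) (w_intervalInt hp hf1 hamem hθmem)).symm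
  have hmono : ∀ t ∈ Set.uIcc a θ, |t| ≤ |θ| := by
    intro t ht
    rw [Set.uIcc_of_ge hθa.le] at ht
    rw [abs_of_nonpos (by linarith [ht.2] : t ≤ 0), abs_of_nonpos (by linarith : θ ≤ 0)]
    linarith [ht.1]
  have hkey := key' hp habs hθ0 hmono hf1
  have hIg : (∫ t in Ι a θ, |f t|) = ∫ t in Ioc θ a, |g t| := by
    rw [Set.uIoc_of_ge hθa.le]
    apply MeasureTheory.setIntegral_congr_fun measurableSet_Ioc
    intro t ht
    have : t ∈ Ioo (-π) π := ⟨by linarith [ht.1], by linarith [ht.2]⟩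
    show |f t| = |(Ioo (-π) π).indicator f t|
    rw [Set.indicator_of_mem this]
  have hIle : (∫ t in Ioc θ a, |g t|) ≤ ∫ t in Ioc (-π) a, |g t| := by
    apply MeasureTheory.setIntegral_mono_set (hgabs.integrableOn)
      (Filter.Eventually.of_forall fun t => abs_nonneg _)
    exact HasSubset.Subset.eventuallyLE (Set.Ioc_subset_Ioc_left hθπ.le)
  have hinv : |Real.tan (θ/2)|⁻¹ ^ p = (|Real.tan (θ/2)| ^ p)⁻¹ :=
    Real.inv_rpow (abs_nonneg _) p
  calc ‖|Real.tan (θ/2)|⁻¹ ^ p * ∫ t in (0:ℝ)..θ, f t * |Real.tan (t/2)| ^ p‖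
      = |Real.tan (θ/2)|⁻¹ ^ p * |∫ t in (0:ℝ)..θ, f t * |Real.tan (t/2)| ^ p| := by
        rw [Real.norm_eq_abs, abs_mul, abs_of_nonneg (Real.rpow_nonneg (by positivity) p)]
    _ ≤ |Real.tan (θ/2)|⁻¹ ^ p * (C + |∫ t in a..θ, f t * |Real.tan (t/2)| ^ p|) := by
        apply mul_le_mul_of_nonneg_left _ (Real.rpow_nonneg (by positivity) p)
        rw [hsplit]; exact abs_add_le _ _
    _ = (|Real.tan (θ/2)| ^ p)⁻¹ * C +
        |Real.tan (θ/2)|⁻¹ ^ p * |∫ t in a..θ, f t * |Real.tan (t/2)| ^ p| := by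
        rw [mul_add, hinv]
    _ ≤ (|Real.tan (θ/2)| ^ p)⁻¹ * C + ∫ t in Ioc (-π) a, |g t| := by
        apply add_le_add_right
        calc |Real.tan (θ/2)|⁻¹ ^ p * |∫ t in a..θ, f t * |Real.tan (t/2)| ^ p|
            ≤ ∫ t in Ι a θ, |f t| := hkey
          _ = ∫ t in Ioc θ a, |g t| := hIg
          _ ≤ ∫ t in Ioc (-π) a, |g t| := hIle
    _ < η/2 + η/2 := add_lt_add_of_lt_of_le hsmall hta.le
    _ = η := by ring

/-- for `ε ∈ (0,2)`, `f ∈ L²(-π,π)` with `∫_{-π}^π f = 0`, and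
`h(θ) = -|cot(θ/2)|^(1/ε) ∫₀^θ f(t) |tan(t/2)|^(1/ε) dt + ∫₀^θ f + k₁` on
`(-π,0) ∪ (0,π)`, the function `h` has limits `k₁` at `0±`, `k₁ + ∫₀^π f` at `π⁻`,
`k₁ + ∫₀^{-π} f` at `-π⁺`, and the two boundary limits agree (so `h` extends to a
continuous periodic function) precisely because `∫_{-π}^π f = 0`. -/
theorem stmt16 (ε : ℝ) (hε : ε ∈ Set.Ioo (0:ℝ) 2)
    (f : ℝ → ℝ) (hf : MemLp f 2 (volume.restrict (Ioo (-π) π)))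
    (hf1 : IntegrableOn f (Ioo (-π) π))
    (hf0 : ∫ t in Ioo (-π) π, f t = 0)
    (k₁ : ℝ) (h : ℝ → ℝ)
    (hh : ∀ θ ∈ Ioo (-π) π, θ ≠ 0 →
      h θ = -(|Real.tan (θ/2)|⁻¹ ^ (1/ε)) *
              (∫ t in (0:ℝ)..θ, f t * |Real.tan (t/2)| ^ (1/ε))
            + (∫ t in (0:ℝ)..θ, f t) + k₁) :
    Tendsto h (nhdsWithin 0 (Ioi 0)) (nhds k₁) ∧
    Tendsto h (nhdsWithin 0 (Iio 0)) (nhds k₁) ∧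
    Tendsto h (nhdsWithin π (Iio π)) (nhds (k₁ + ∫ t in (0:ℝ)..π, f t)) ∧
    Tendsto h (nhdsWithin (-π) (Ioi (-π))) (nhds (k₁ + ∫ t in (0:ℝ)..(-π), f t)) ∧
    k₁ + (∫ t in (0:ℝ)..π, f t) = k₁ + ∫ t in (0:ℝ)..(-π), f t := by
  have hπ := Real.pi_pos
  obtain ⟨hε0, hε2⟩ := hε
  have hp : 0 < 1/ε := by positivity
  set p : ℝ := 1/ε with hpdef
  set g : ℝ → ℝ := (Ioo (-π) π).indicator f with hgdef
  have hg : Integrable g volume := hf1.integrable_indicator measurableSet_Ioo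
  have hgabs : Integrable (fun t => |g t|) volume := hg.abs
  set P : ℝ → ℝ := fun x => ∫ t in (0:ℝ)..x, g t with hPdef
  have hPc : Continuous P := hg.continuous_primitive 0
  set G : ℝ → ℝ := fun x => ∫ t in (0:ℝ)..x, |g t| with hGdef
  have hGc : Continuous G := hgabs.continuous_primitive 0
  have h0mem : (0:ℝ) ∈ Ioo (-π) π := ⟨by linarith, hπ⟩
  have hcong : ∀ θ ∈ Ioo (-π) π, (∫ t in (0:ℝ)..θ, f t) = P θ := by
    intro θ hθ
    apply intervalIntegral.integral_congr
    intro t ht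
    have : t ∈ Ioo (-π) π := Set.ordConnected_Ioo.uIcc_subset h0mem hθ ht
    show f t = (Ioo (-π) π).indicator f t
    rw [Set.indicator_of_mem this]
  -- |G θ| equals the uIoc integral of |f|
  have habsG : ∀ θ ∈ Ioo (-π) π, (∫ t in Ι 0 θ, |f t|) = |G θ| := by
    intro θ hθ
    have hcg : (∫ t in Ι 0 θ, |f t|) = ∫ t in Ι 0 θ, |g t| := by
      apply MeasureTheory.setIntegral_congr_fun measurableSet_uIoc
      intro t ht
      have : t ∈ Ioo (-π) π :=
        Set.ordConnected_Ioo.uIcc_subset h0mem hθ (Set.uIoc_subset_uIcc ht)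
      show |f t| = |(Ioo (-π) π).indicator f t|
      rw [Set.indicator_of_mem this]
    rw [hcg]
    rcases le_total 0 θ with hs | hs
    · rw [Set.uIoc_of_le hs, hGdef]
      rw [show (∫ t in Ioc 0 θ, |g t|) = ∫ t in (0:ℝ)..θ, |g t| by
        rw [intervalIntegral.integral_of_le hs] ]
      rw [abs_of_nonneg (intervalIntegral.integral_nonneg hs fun t _ => abs_nonneg _)]
    · rw [Set.uIoc_of_ge hs, hGdef]
      rw [show (∫ t in Ioc θ 0, |g t|) = ∫ t in θ..(0:ℝ), |g t| by
        rw [intervalIntegral.integral_of_le hs] ]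
      rw [intervalIntegral.integral_symm]
      rw [abs_of_nonpos]
      simp only [neg_neg]
      rw [intervalIntegral.integral_symm]
      simp only [neg_nonpos]
      exact intervalIntegral.integral_nonneg hs fun t _ => abs_nonneg _
  -- pointwise bound near 0
  have hbound : ∀ θ ∈ Ioo (-π) π, θ ≠ 0 → ‖h θ - k₁‖ ≤ |G θ| + |P θ| := by
    intro θ hθ hθ0
    rw [hh θ hθ hθ0]
    have hmono : ∀ t ∈ Set.uIcc 0 θ, |t| ≤ |θ| := by
      intro t ht
      rcases le_total 0 θ with hs | hs
      · rw [Set.uIcc_of_le hs] at ht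
        rw [abs_of_nonneg ht.1, abs_of_nonneg hs]; exact ht.2
      · rw [Set.uIcc_of_ge hs] at ht
        rw [abs_of_nonpos ht.2, abs_of_nonpos hs]; linarith [ht.1]
    have hkey := key' hp (abs_lt.mpr ⟨hθ.1, hθ.2⟩) hθ0 hmono hf1
    rw [habsG θ hθ] at hkey
    calc ‖-(|Real.tan (θ/2)|⁻¹ ^ p) * (∫ t in (0:ℝ)..θ, f t * |Real.tan (t/2)| ^ p)
          + (∫ t in (0:ℝ)..θ, f t) + k₁ - k₁‖
        = |(-(|Real.tan (θ/2)|⁻¹ ^ p)) * (∫ t in (0:ℝ)..θ, f t * |Real.tan (t/2)| ^ p)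
          + (∫ t in (0:ℝ)..θ, f t)| := by rw [Real.norm_eq_abs, add_sub_cancel_right]
      _ ≤ |(-(|Real.tan (θ/2)|⁻¹ ^ p)) * (∫ t in (0:ℝ)..θ, f t * |Real.tan (t/2)| ^ p)|
          + |∫ t in (0:ℝ)..θ, f t| := abs_add_le _ _
      _ ≤ |G θ| + |P θ| := by
          apply add_le_add
          · rw [neg_mul, abs_neg, abs_mul,
              abs_of_nonneg (Real.rpow_nonneg (by positivity) p)]
            exact hkey
          · rw [hcong θ hθ]
  -- limits at 0
  have hB : Tendsto (fun θ => |G θ| + |P θ|) (nhds (0:ℝ)) (nhds 0) := by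
    have hc : Continuous (fun θ => |G θ| + |P θ|) := (hGc.abs).add (hPc.abs)
    have := hc.tendsto 0
    simpa [hGdef, hPdef] using this
  have hzero : ∀ s : Set ℝ, Tendsto h (nhdsWithin 0 s) (nhds k₁) ∨ True := fun _ => Or.inr trivial
  have h0p : Tendsto h (nhdsWithin 0 (Ioi 0)) (nhds k₁) := by
    have hsq : Tendsto (fun θ => h θ - k₁) (nhdsWithin 0 (Ioi 0)) (nhds 0) := by
      apply squeeze_zero_norm' _ (hB.mono_left nhdsWithin_le_nhds)
      filter_upwards [eventually_nhdsWithin_of_eventually_nhds (eventually_lt_nhds hπ),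
        self_mem_nhdsWithin] with θ (h1 : θ < π) (h2 : (0:ℝ) < θ)
      exact hbound θ ⟨by linarith, h1⟩ (ne_of_gt h2)
    have := hsq.add_const k₁
    simpa using this
  have h0m : Tendsto h (nhdsWithin 0 (Iio 0)) (nhds k₁) := by
    have hsq : Tendsto (fun θ => h θ - k₁) (nhdsWithin 0 (Iio 0)) (nhds 0) := by
      apply squeeze_zero_norm' _ (hB.mono_left nhdsWithin_le_nhds)
      filter_upwards [eventually_nhdsWithin_of_eventually_nhds
        (eventually_gt_nhds (by linarith : -π < (0:ℝ))),
        self_mem_nhdsWithin] with θ (h1 : -π < θ) (h2 : θ < 0)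
      exact hbound θ ⟨h1, by linarith⟩ (ne_of_lt h2)
    have := hsq.add_const k₁
    simpa using this
  -- value identifications
  have hPπ : P π = ∫ t in (0:ℝ)..π, f t := by
    show (∫ t in (0:ℝ)..π, g t) = ∫ t in (0:ℝ)..π, f t
    rw [intervalIntegral.integral_of_le hπ.le, intervalIntegral.integral_of_le hπ.le]
    rw [MeasureTheory.integral_Ioc_eq_integral_Ioo, MeasureTheory.integral_Ioc_eq_integral_Ioo]
    apply MeasureTheory.setIntegral_congr_fun measurableSet_Ioo
    intro t ht
    have : t ∈ Ioo (-π) π := ⟨by linarith [ht.1], ht.2⟩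
    show (Ioo (-π) π).indicator f t = f t
    rw [Set.indicator_of_mem this]
  have hPmπ : P (-π) = ∫ t in (0:ℝ)..(-π), f t := by
    have haux : (∫ t in (-π)..(0:ℝ), g t) = ∫ t in (-π)..(0:ℝ), f t := by
      rw [intervalIntegral.integral_of_le (by linarith : -π ≤ (0:ℝ)),
        intervalIntegral.integral_of_le (by linarith : -π ≤ (0:ℝ))]
      rw [MeasureTheory.integral_Ioc_eq_integral_Ioo,
        MeasureTheory.integral_Ioc_eq_integral_Ioo]
      apply MeasureTheory.setIntegral_congr_fun measurableSet_Ioo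
      intro t ht
      have : t ∈ Ioo (-π) π := ⟨ht.1, by linarith [ht.2]⟩
      show (Ioo (-π) π).indicator f t = f t
      rw [Set.indicator_of_mem this]
    calc P (-π) = -∫ t in (-π)..(0:ℝ), g t := intervalIntegral.integral_symm _ _
      _ = -∫ t in (-π)..(0:ℝ), f t := by rw [haux]
      _ = ∫ t in (0:ℝ)..(-π), f t := (intervalIntegral.integral_symm _ _).symm
  -- limit at π⁻
  have hπlim : Tendsto h (nhdsWithin π (Iio π)) (nhds (k₁ + ∫ t in (0:ℝ)..π, f t)) := by
    have hT := T_pi hp hf1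
    have hI : Tendsto P (nhdsWithin π (Iio π)) (nhds (∫ t in (0:ℝ)..π, f t)) := by
      rw [← hPπ]
      exact (hPc.tendsto π).mono_left nhdsWithin_le_nhds
    have hcomb := (hT.neg.add hI).add_const k₁
    simp only [neg_zero, zero_add] at hcomb
    rw [add_comm k₁ (∫ t in (0:ℝ)..π, f t)]
    apply hcomb.congr'
    filter_upwards [eventually_nhdsWithin_of_eventually_nhds (eventually_gt_nhds hπ),
      self_mem_nhdsWithin] with θ (h1 : 0 < θ) (h2 : θ < π)
    rw [hh θ ⟨by linarith, h2⟩ (ne_of_gt h1), hcong θ ⟨by linarith, h2⟩]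
    ring
  -- limit at -π⁺
  have hmπlim : Tendsto h (nhdsWithin (-π) (Ioi (-π)))
      (nhds (k₁ + ∫ t in (0:ℝ)..(-π), f t)) := by
    have hT := T_negpi hp hf1
    have hI : Tendsto P (nhdsWithin (-π) (Ioi (-π)))
        (nhds (∫ t in (0:ℝ)..(-π), f t)) := by
      rw [← hPmπ]
      exact (hPc.tendsto (-π)).mono_left nhdsWithin_le_nhds
    have hcomb := (hT.neg.add hI).add_const k₁
    simp only [neg_zero, zero_add] at hcomb
    rw [add_comm k₁ (∫ t in (0:ℝ)..(-π), f t)]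
    apply hcomb.congr'
    filter_upwards [eventually_nhdsWithin_of_eventually_nhds
      (eventually_lt_nhds (by linarith : -π < (0:ℝ))),
      self_mem_nhdsWithin] with θ (h1 : θ < 0) (h2 : -π < θ)
    rw [hh θ ⟨h2, by linarith⟩ (ne_of_lt h1), hcong θ ⟨h2, by linarith⟩]
    ring
  -- the boundary values agree
  have hint1 : IntervalIntegrable f volume (-π) 0 := by
    rw [intervalIntegrable_iff, Set.uIoc_of_le (by linarith : -π ≤ (0:ℝ))]
    exact hf1.mono_set (fun t ht => ⟨ht.1, by linarith [ht.2]⟩)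
  have hint2 : IntervalIntegrable f volume 0 π := by
    rw [intervalIntegrable_iff, Set.uIoc_of_le hπ.le,
      integrableOn_Ioc_iff_integrableOn_Ioo]
    exact hf1.mono_set (fun t ht => ⟨by linarith [ht.1], ht.2⟩)
  have hsum : (∫ t in (-π)..(0:ℝ), f t) + ∫ t in (0:ℝ)..π, f t = ∫ t in (-π)..π, f t :=
    intervalIntegral.integral_add_adjacent_intervals hint1 hint2
  have htot : (∫ t in (-π)..π, f t) = 0 := by
    rw [intervalIntegral.integral_of_le (by linarith : -π ≤ π),
      MeasureTheory.integral_Ioc_eq_integral_Ioo]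
    exact hf0
  have hfinal : k₁ + (∫ t in (0:ℝ)..π, f t) = k₁ + ∫ t in (0:ℝ)..(-π), f t := by
    have h1 : (∫ t in (0:ℝ)..(-π), f t) = -∫ t in (-π)..(0:ℝ), f t :=
      intervalIntegral.integral_symm _ _
    rw [h1]
    have : (∫ t in (0:ℝ)..π, f t) = -∫ t in (-π)..(0:ℝ), f t := by
      rw [htot] at hsum; linarith
    rw [this]
  exact ⟨h0p, h0m, hπlim, hmπlim, hfinal⟩
end
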